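/- arXiv:2312.08759 — 7 statements merged into one kernel-verified Lean document; each statement's English description precedes it below -/
import Mathlib

section
/- Let G be a graph with girth at least 7 and maximum degree Δ ≥ 2. Then the clique number of the square G² equals Δ + 1. -/
/-- The square of a simple graph: two distinct vertices are adjacent iff
their distance in `G` is at most `2`. -/
def SimpleGraph.square {V : Type*} (G : SimpleGraph V) : SimpleGraph V where
  Adj u v := u ≠ v ∧ (G.Adj u v ∨ ∃ w, G.Adj u w ∧ G.Adj w v)
  symm := ⟨fun u v => by
    rintro ⟨huv, h | ⟨w, h1, h2⟩⟩
    · exact ⟨huv.symm, Or.inl h.symm⟩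
    · exact ⟨huv.symm, Or.inr ⟨w, h2.symm, h1.symm⟩⟩⟩
  loopless := ⟨fun v => by simp⟩

section aux
open SimpleGraph
variable {V : Type*} {G : SimpleGraph V}

open SimpleGraph
variable {V : Type*} {G : SimpleGraph V}

lemma noC3 (hg : 7 ≤ G.egirth) {a b c : V} (h1 : G.Adj a b) (h2 : G.Adj b c)
    (h3 : G.Adj c a) : False := by
  have hc : (Walk.cons h1 (Walk.cons h2 (Walk.cons h3 Walk.nil))).IsCycle := by
    simp [Walk.isCycle_def, Walk.isTrail_def, h1.ne, h2.ne, h3.ne, h1.ne', h2.ne', h3.ne',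
      Sym2.eq, Sym2.rel_iff']
  have := le_egirth.mp hg a _ hc
  norm_num at this

lemma noC4 (hg : 7 ≤ G.egirth) {a b c d : V} (h1 : G.Adj a b) (h2 : G.Adj b c)
    (h3 : G.Adj c d) (h4 : G.Adj d a) (hac : a ≠ c) (hbd : b ≠ d) : False := by
  have hc : (Walk.cons h1 (Walk.cons h2 (Walk.cons h3 (Walk.cons h4 Walk.nil)))).IsCycle := by
    simp [Walk.isCycle_def, Walk.isTrail_def, h1.ne, h2.ne, h3.ne, h4.ne,
      h1.ne', h2.ne', h3.ne', h4.ne', hac, hbd, hac.symm, hbd.symm, Sym2.eq, Sym2.rel_iff']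
  have := le_egirth.mp hg a _ hc
  norm_num at this

lemma noC5 (hg : 7 ≤ G.egirth) {a b c d e : V} (h1 : G.Adj a b) (h2 : G.Adj b c)
    (h3 : G.Adj c d) (h4 : G.Adj d e) (h5 : G.Adj e a)
    (hac : a ≠ c) (hbd : b ≠ d) (hce : c ≠ e) (hda : d ≠ a) (heb : e ≠ b) : False := by
  have hc : (Walk.cons h1 (Walk.cons h2 (Walk.cons h3 (Walk.cons h4
      (Walk.cons h5 Walk.nil))))).IsCycle := by
    simp [Walk.isCycle_def, Walk.isTrail_def, h1.ne, h2.ne, h3.ne, h4.ne, h5.ne,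
      h1.ne', h2.ne', h3.ne', h4.ne', h5.ne', hac, hbd, hce, hda, heb,
      hac.symm, hbd.symm, hce.symm, hda.symm, heb.symm, Sym2.eq, Sym2.rel_iff']
  have := le_egirth.mp hg a _ hc
  norm_num at this

lemma noC6 (hg : 7 ≤ G.egirth) {a b c d e f : V} (h1 : G.Adj a b) (h2 : G.Adj b c)
    (h3 : G.Adj c d) (h4 : G.Adj d e) (h5 : G.Adj e f) (h6 : G.Adj f a)
    (hac : a ≠ c) (hbd : b ≠ d) (hce : c ≠ e) (hdf : d ≠ f) (hea : e ≠ a) (hfb : f ≠ b)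
    (had : a ≠ d) (hbe : b ≠ e) (hcf : c ≠ f) : False := by
  have hc : (Walk.cons h1 (Walk.cons h2 (Walk.cons h3 (Walk.cons h4
      (Walk.cons h5 (Walk.cons h6 Walk.nil)))))).IsCycle := by
    simp [Walk.isCycle_def, Walk.isTrail_def, h1.ne, h2.ne, h3.ne, h4.ne, h5.ne, h6.ne,
      h1.ne', h2.ne', h3.ne', h4.ne', h5.ne', h6.ne', hac, hbd, hce, hdf, hea, hfb, had, hbe, hcf,
      hac.symm, hbd.symm, hce.symm, hdf.symm, hea.symm, hfb.symm, had.symm, hbe.symm, hcf.symm,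
      Sym2.eq, Sym2.rel_iff']
  have := le_egirth.mp hg a _ hc
  norm_num at this

-- each vertex of the clique other than u,v is adjacent to u or v, given edge uv
lemma adj_one (hg : 7 ≤ G.egirth) {u v x : V} (hxu : x ≠ u) (hxv : x ≠ v)
    (huv : G.Adj u v) (h1 : G.square.Adj x u) (h2 : G.square.Adj x v) :
    G.Adj u x ∨ G.Adj v x := by
  by_contra h
  push_neg at h
  obtain ⟨hu, hv⟩ := h
  obtain ⟨-, h1⟩ := h1
  obtain ⟨-, h2⟩ := h2
  rcases h1 with h1 | ⟨a, hxa, hau⟩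
  · exact hu h1.symm
  rcases h2 with h2 | ⟨b, hxb, hbv⟩
  · exact hv h2.symm
  by_cases hab : a = b
  · subst hab
    exact noC3 hg hau huv (hbv.symm)  -- a-u, u-v, v-a
  · -- 5-cycle x a u v b
    have hav : a ≠ v := fun h => hv (h ▸ hxa).symm
    have hbu : b ≠ u := fun h => hu (h ▸ hxb).symm
    exact noC5 hg hxa hau huv hbv.symm hxb.symm hxu hav hbu.symm hxv.symm (Ne.symm hab)

lemma edge_case (hg : 7 ≤ G.egirth) {s : Finset V} (hs : G.square.IsClique ↑s)
    {u v : V} (hu : u ∈ s) (hv : v ∈ s) (huv : G.Adj u v) :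
    (∀ x ∈ s, x = u ∨ G.Adj u x) ∨ (∀ x ∈ s, x = v ∨ G.Adj v x) := by
  by_contra h
  push_neg at h
  obtain ⟨⟨x, hxs, hxu, hux⟩, ⟨y, hys, hyv, hvy⟩⟩ := h
  have hxv : x ≠ v := fun h => hux (h ▸ huv)
  have hyu : y ≠ u := fun h => hvy (h ▸ huv.symm)
  have hx : G.Adj v x := by
    rcases adj_one hg hxu hxv huv (hs hxs hu hxu) (hs hxs hv hxv) with h | h
    · exact absurd h hux
    · exact h
  have hy : G.Adj u y := by
    rcases adj_one hg hyu hyv huv (hs hys hu hyu) (hs hys hv hyv) with h | h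
    · exact h
    · exact absurd h hvy
  have hxy : x ≠ y := fun h => hvy (h ▸ hx)
  -- square adjacency between x and y
  obtain ⟨-, hsq⟩ := hs hxs hys hxy
  rcases hsq with hadj | ⟨c, hxc, hcy⟩
  · -- 4-cycle x y u v
    exact noC4 hg hadj hy.symm huv hx hxu hyv
  · -- 5-cycle x c y u v
    have hcu : c ≠ u := fun h => hux (h ▸ hxc).symm
    have hcv : c ≠ v := fun h => hvy ((h ▸ hcy))
    exact noC5 hg hxc hcy hy.symm huv hx hxy hcu hyv (Ne.symm hxu) hcv.symm

lemma nonedge_case (hg : 7 ≤ G.egirth) {s : Finset V} (hs : G.square.IsClique ↑s)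
    (hne : ∀ x ∈ s, ∀ y ∈ s, ¬ G.Adj x y)
    {u v : V} (hu : u ∈ s) (hv : v ∈ s) (huv : u ≠ v) :
    ∃ w, ∀ x ∈ s, G.Adj w x := by
  obtain ⟨-, hsq⟩ := hs hu hv huv
  rcases hsq with hadj | ⟨w, huw, hwv⟩
  · exact absurd hadj (hne u hu v hv)
  refine ⟨w, fun x hxs => ?_⟩
  by_cases hxu : x = u
  · exact hxu ▸ huw.symm
  by_cases hxv : x = v
  · exact hxv ▸ hwv
  obtain ⟨-, hsq1⟩ := hs hxs hu hxu
  rcases hsq1 with hadj | ⟨w1, hxw1, hw1u⟩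
  · exact absurd hadj (hne x hxs u hu)
  obtain ⟨-, hsq2⟩ := hs hxs hv hxv
  rcases hsq2 with hadj | ⟨w2, hxw2, hw2v⟩
  · exact absurd hadj (hne x hxs v hv)
  by_cases h1 : w1 = w
  · exact h1 ▸ hxw1.symm
  by_cases h2 : w2 = w
  · exact h2 ▸ hxw2.symm
  by_cases h12 : w1 = w2
  · -- 4-cycle u w v w1
    exact absurd (noC4 hg huw hwv (h12 ▸ hw2v).symm hw1u huv (Ne.symm h1)) not_false
  · -- 6-cycle u w v w2 x w1
    have hw2u : w2 ≠ u := fun h => hne u hu v hv (h ▸ hw2v)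
    have hwx : w ≠ x := fun h => hne x hxs u hu (h ▸ huw).symm
    have hw1v : w1 ≠ v := fun h => hne x hxs v hv (h ▸ hxw1)
    exact absurd (noC6 hg huw hwv hw2v.symm hxw2.symm hxw1 hw1u huv (Ne.symm h2) (Ne.symm hxv)
      (Ne.symm h12) hxu h1 hw2u.symm hwx hw1v.symm) not_false

end aux

/-- If `G` has girth at least `7` and maximum degree `Δ ≥ 2`, then the clique
number of `G²` equals `Δ + 1`. -/
theorem cliqueNum_square_of_girth_ge_seven {V : Type*} [Fintype V]
    (G : SimpleGraph V) [DecidableRel G.Adj]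
    (hgirth : 7 ≤ G.egirth) (hdeg : 2 ≤ G.maxDegree) :
    G.square.cliqueNum = G.maxDegree + 1 := by
  classical
  haveI : Nonempty V := by
    by_contra h
    rw [not_nonempty_iff] at h
    have : G.maxDegree = 0 := by simp [SimpleGraph.maxDegree]
    omega
  apply le_antisymm
  · -- upper bound
    obtain ⟨t, htc, htcard⟩ := G.square.exists_isNClique_cliqueNum
    rw [← htcard]
    by_cases hedge : ∃ u ∈ t, ∃ v ∈ t, G.Adj u v
    · obtain ⟨u, hu, v, hv, huv⟩ := hedge
      have h := edge_case hgirth htc hu hv huv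
      have key : ∃ w, ∀ x ∈ t, x = w ∨ G.Adj w x := by
        rcases h with h | h
        · exact ⟨u, h⟩
        · exact ⟨v, h⟩
      obtain ⟨w, hw⟩ := key
      have hsub : t ⊆ insert w (G.neighborFinset w) := by
        intro x hx
        rcases hw x hx with rfl | hadj
        · exact Finset.mem_insert_self _ _
        · exact Finset.mem_insert_of_mem (by rwa [SimpleGraph.mem_neighborFinset])
      calc t.card ≤ (insert w (G.neighborFinset w)).card := Finset.card_le_card hsub
        _ ≤ G.degree w + 1 := by
            rw [Finset.card_insert_of_notMem (by simp), SimpleGraph.card_neighborFinset_eq_degree]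
        _ ≤ G.maxDegree + 1 := by
            have := G.degree_le_maxDegree w; omega
    · push_neg at hedge
      by_cases hone : t.card ≤ 1
      · omega
      · obtain ⟨u, hu, v, hv, huv⟩ := Finset.one_lt_card.mp (show 1 < t.card by omega)
        obtain ⟨w, hw⟩ := nonedge_case hgirth htc hedge hu hv huv
        have hsub : t ⊆ G.neighborFinset w := by
          intro x hx
          rw [SimpleGraph.mem_neighborFinset]
          exact hw x hx
        have := Finset.card_le_card hsub
        rw [SimpleGraph.card_neighborFinset_eq_degree] at this
        have := G.degree_le_maxDegree w
        omega
  · -- lower bound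
    obtain ⟨v, hv⟩ := G.exists_maximal_degree_vertex
    have hclique : G.square.IsClique ↑(insert v (G.neighborFinset v)) := by
      intro x hx y hy hxy
      simp only [Finset.coe_insert, Set.mem_insert_iff, Finset.mem_coe,
        SimpleGraph.mem_neighborFinset] at hx hy
      refine ⟨hxy, ?_⟩
      rcases hx with rfl | hx <;> rcases hy with rfl | hy
      · exact absurd rfl hxy
      · exact Or.inl hy
      · exact Or.inl hx.symm
      · exact Or.inr ⟨v, hx.symm, hy⟩
    have hcard : (insert v (G.neighborFinset v)).card = G.degree v + 1 := by
      rw [Finset.card_insert_of_notMem (by simp), SimpleGraph.card_neighborFinset_eq_degree]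
    have := hclique.card_le_cliqueNum
    rw [hcard] at this
    omega
end

section
/- Let G = (A, B, E) be a convex bipartite graph with the convexity ordering <_B on B. Then the ordering <_B is a proper vertex ordering of G²[B]: for any three vertices u <_B v <_B w in B, if uw ∈ E(G²) then uv ∈ E(G²) and vw ∈ E(G²). Consequently G²[B] is a proper interval graph. -/
/-- `A, B` form a bipartition of the graph `G`: they partition the vertex set and
every edge goes between `A` and `B`. -/
def SimpleGraph.IsBipartitionOf {V : Type*} (G : SimpleGraph V) (A B : Set V) : Prop :=
  (∀ v, v ∈ A ∨ v ∈ B) ∧ Disjoint A B ∧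
    ∀ ⦃u v⦄, G.Adj u v → (u ∈ A ∧ v ∈ B) ∨ (u ∈ B ∧ v ∈ A)

/-- `ordB` is a convexity ordering of the part `B`: it is injective on `B` and for each
`a ∈ A` the neighborhood `N_G(a)` is a consecutive (convex) set with respect to it. -/
def SimpleGraph.IsConvexityOrder {V : Type*} (G : SimpleGraph V) (A B : Set V)
    (ordB : V → ℕ) : Prop :=
  Set.InjOn ordB B ∧
    ∀ a ∈ A, ∀ b₁ ∈ B, ∀ b₂ ∈ B, ∀ b₃ ∈ B, G.Adj a b₁ → G.Adj a b₃ →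
      ordB b₁ ≤ ordB b₂ → ordB b₂ ≤ ordB b₃ → G.Adj a b₂

/-- A graph has a proper vertex ordering (equivalently, is a proper interval graph)
if there is an injective ordering `f` of its vertices such that for `u < v < w`,
`uw ∈ E` implies `uv ∈ E` and `vw ∈ E`. -/
def SimpleGraph.HasProperVertexOrdering {W : Type*} (H : SimpleGraph W) : Prop :=
  ∃ f : W → ℕ, Function.Injective f ∧
    ∀ u v w, f u < f v → f v < f w → H.Adj u w → H.Adj u v ∧ H.Adj v w

/-- In a convex bipartite graph `G = (A,B,E)`, the convexity ordering `<_B` is a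
proper vertex ordering of `G²[B]`; consequently `G²[B]` is a proper interval graph. -/
theorem convex_bipartite_square_B_proper {V : Type*} (G : SimpleGraph V) (A B : Set V)
    (ordB : V → ℕ) (hbip : G.IsBipartitionOf A B) (hconv : G.IsConvexityOrder A B ordB) :
    (∀ u ∈ B, ∀ v ∈ B, ∀ w ∈ B, ordB u < ordB v → ordB v < ordB w →
      G.square.Adj u w → G.square.Adj u v ∧ G.square.Adj v w) ∧
    (G.square.induce B).HasProperVertexOrdering := by

  obtain ⟨hcover, hdisj, hedge⟩ := hbip
  obtain ⟨hinj, hcvx⟩ := hconv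
  have key : ∀ u ∈ B, ∀ v ∈ B, ∀ w ∈ B, ordB u < ordB v → ordB v < ordB w →
      G.square.Adj u w → G.square.Adj u v ∧ G.square.Adj v w := by
    intro u hu v hv w hw huv hvw ⟨hne, hadj⟩
    have huA : u ∉ A := fun h => hdisj.le_bot ⟨h, hu⟩
    have hwA : w ∉ A := fun h => hdisj.le_bot ⟨h, hw⟩
    obtain ⟨a, ha1, ha2⟩ : ∃ a, G.Adj u a ∧ G.Adj a w := by
      rcases hadj with h | h
      · exact absurd ((hedge h).resolve_left (fun ⟨h1, _⟩ => huA h1)).2 hwA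
      · exact h
    have haA : a ∈ A := ((hedge ha1).resolve_left (fun ⟨h1, _⟩ => huA h1)).2
    have hav : G.Adj a v := hcvx a haA u hu v hv w hw ha1.symm ha2 huv.le hvw.le
    have hne1 : u ≠ v := fun h => absurd (h ▸ huv) (lt_irrefl _)
    have hne2 : v ≠ w := fun h => absurd (h ▸ hvw) (lt_irrefl _)
    exact ⟨⟨hne1, Or.inr ⟨a, ha1, hav⟩⟩, ⟨hne2, Or.inr ⟨a, hav.symm, ha2⟩⟩⟩
  refine ⟨key, fun b => ordB b.1, fun x y h => Subtype.ext (hinj x.2 y.2 h), ?_⟩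
  intro u v w huv hvw hadj
  exact key u u.2 v v.2 w w.2 huv hvw hadj
end

section
/- Let G = (A, B, E) be a convex bipartite graph with orderings <_A on A and <_B on B as above. Then for each vertex a ∈ A, the set of <_A-later neighbors N_{G²}(a) ∩ {a' ∈ A : a <_A a'} is a clique in G², and for each b ∈ B, the set of <_B-later neighbors N_{G²}(b) ∩ {b' ∈ B : b <_B b'} is a clique in G². -/
/-- `ordA` orders `A` by the right endpoints of the neighborhood intervals in `B`:
it is injective on `A`, and whenever `ordA a ≤ ordA a'`, the right endpoint of the
interval of `a` is at most that of `a'` (i.e. every `G`-neighbor of `a` is `≤_B`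
some `G`-neighbor of `a'`). -/
def SimpleGraph.IsRightEndpointOrder {V : Type*} (G : SimpleGraph V) (A B : Set V)
    (ordA ordB : V → ℕ) : Prop :=
  Set.InjOn ordA A ∧
    ∀ a ∈ A, ∀ a' ∈ A, ordA a ≤ ordA a' → ∀ b ∈ B, G.Adj a b →
      ∃ b' ∈ B, G.Adj a' b' ∧ ordB b ≤ ordB b'

/-- In a convex bipartite graph with orderings `<_A` and `<_B`, for each `a ∈ A` the
set of `G²`-neighbors of `a` in `A` coming later in `<_A` is a clique in `G²`, and
for each `b ∈ B` the set of `G²`-neighbors of `b` in `B` coming later in `<_B` is a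
clique in `G²`. -/
theorem convex_bipartite_later_neighbors_clique {V : Type*} (G : SimpleGraph V)
    (A B : Set V) (ordA ordB : V → ℕ) (hbip : G.IsBipartitionOf A B)
    (hconv : G.IsConvexityOrder A B ordB)
    (hord : G.IsRightEndpointOrder A B ordA ordB) :
    (∀ a ∈ A, G.square.IsClique
      {a' | a' ∈ A ∧ G.square.Adj a a' ∧ ordA a < ordA a'}) ∧
    (∀ b ∈ B, G.square.IsClique
      {b' | b' ∈ B ∧ G.square.Adj b b' ∧ ordB b < ordB b'}) := by

  obtain ⟨hcover, hdisj, hedge⟩ := hbip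
  obtain ⟨hinjB, hconv'⟩ := hconv
  obtain ⟨hinjA, hord'⟩ := hord
  have edgeB : ∀ {a w}, a ∈ A → G.Adj a w → w ∈ B := by
    intro a w ha h
    rcases hedge h with ⟨_, hw⟩ | ⟨ha', _⟩
    · exact hw
    · exact absurd ha' (Set.disjoint_left.mp hdisj ha)
  have edgeA : ∀ {b w}, b ∈ B → G.Adj b w → w ∈ A := by
    intro b w hb h
    rcases hedge h with ⟨hb', _⟩ | ⟨_, hw⟩
    · exact absurd hb' (Set.disjoint_right.mp hdisj hb)
    · exact hw
  constructor
  · intro a ha x hx y hy hxy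
    obtain ⟨hxA, hax, haltx⟩ := hx
    obtain ⟨hyA, hay, halty⟩ := hy
    have hnbx : ¬ G.Adj a x := fun h =>
      Set.disjoint_left.mp hdisj hxA (edgeB ha h)
    have hnby : ¬ G.Adj a y := fun h =>
      Set.disjoint_left.mp hdisj hyA (edgeB ha h)
    obtain ⟨b1, hab1, hb1x⟩ := hax.2.resolve_left hnbx
    obtain ⟨b2, hab2, hb2y⟩ := hay.2.resolve_left hnby
    have hb1B : b1 ∈ B := edgeB ha hab1
    have hb2B : b2 ∈ B := edgeB ha hab2
    refine ⟨hxy, Or.inr ?_⟩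
    rcases le_total (ordB b1) (ordB b2) with h | h
    · obtain ⟨b'', hb''B, hxb'', hle⟩ := hord' a ha x hxA haltx.le b2 hb2B hab2
      have hx2 : G.Adj x b2 :=
        hconv' x hxA b1 hb1B b2 hb2B b'' hb''B hb1x.symm hxb'' h hle
      exact ⟨b2, hx2, hb2y⟩
    · obtain ⟨b'', hb''B, hyb'', hle⟩ := hord' a ha y hyA halty.le b1 hb1B hab1
      have hy1 : G.Adj y b1 :=
        hconv' y hyA b2 hb2B b1 hb1B b'' hb''B hb2y.symm hyb'' h hle
      exact ⟨b1, hb1x.symm, hy1.symm⟩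
  · intro b hb x hx y hy hxy
    obtain ⟨hxB, hbx, hbltx⟩ := hx
    obtain ⟨hyB, hby, hblty⟩ := hy
    have hnbx : ¬ G.Adj b x := fun h =>
      Set.disjoint_right.mp hdisj hxB (edgeA hb h)
    have hnby : ¬ G.Adj b y := fun h =>
      Set.disjoint_right.mp hdisj hyB (edgeA hb h)
    obtain ⟨a1, hba1, ha1x⟩ := hbx.2.resolve_left hnbx
    obtain ⟨a2, hba2, ha2y⟩ := hby.2.resolve_left hnby
    have ha1A : a1 ∈ A := edgeA hb hba1
    have ha2A : a2 ∈ A := edgeA hb hba2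
    refine ⟨hxy, Or.inr ?_⟩
    rcases le_total (ordB x) (ordB y) with h | h
    · have ha2x : G.Adj a2 x :=
        hconv' a2 ha2A b hb x hxB y hyB hba2.symm ha2y hbltx.le h
      exact ⟨a2, ha2x.symm, ha2y⟩
    · have ha1y : G.Adj a1 y :=
        hconv' a1 ha1A b hb y hyB x hxB hba1.symm ha1x hblty.le h
      exact ⟨a1, ha1x.symm, ha1y⟩
end

section
/- Let G be a convex bipartite graph with maximum degree Δ ≥ 1. Then χ(G²) ≤ 2Δ. Moreover, for the complete bipartite graph K_{n,n} (which is convex bipartite with Δ = n), one has χ((K_{n,n})²) = 2n = 2Δ, so the bound is tight. -/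
open Finset

noncomputable def mex (s : Finset ℕ) : ℕ := Nat.find (Infinite.exists_notMem_finset s)

lemma mex_not_mem (s : Finset ℕ) : mex s ∉ s := Nat.find_spec (Infinite.exists_notMem_finset s)

lemma mex_le_card (s : Finset ℕ) : mex s ≤ s.card := by
  by_contra h
  push_neg at h
  have hsub : Finset.range (s.card + 1) ⊆ s := by
    intro n hn
    rw [Finset.mem_range] at hn
    by_contra hns
    have : mex s ≤ n := Nat.find_le hns
    omega
  have := Finset.card_le_card hsub
  simp at this

open Classical in
noncomputable def greedy {V : Type} [Fintype V] (H : SimpleGraph V) (ord : V → ℕ) (v : V) : ℕ :=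
  mex (((Finset.univ.filter (fun u => H.Adj u v ∧ ord u < ord v)).attach).image
    (fun u => greedy H ord u.1))
termination_by ord v
decreasing_by
  have := u.2
  simp only [Finset.mem_filter] at this
  exact this.2.2

open Classical in
lemma greedy_lt {V : Type} [Fintype V] (H : SimpleGraph V) (ord : V → ℕ) (v : V) (k : ℕ)
    (h : (Finset.univ.filter (fun u => H.Adj u v ∧ ord u < ord v)).card < k) :
    greedy H ord v < k := by
  rw [greedy]
  calc mex _ ≤ _ := mex_le_card _
    _ ≤ _ := Finset.card_image_le
    _ < k := by rwa [Finset.card_attach]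

open Classical in
lemma greedy_ne {V : Type} [Fintype V] (H : SimpleGraph V) (ord : V → ℕ) {u v : V}
    (hadj : H.Adj u v) (hlt : ord u < ord v) : greedy H ord v ≠ greedy H ord u := by
  rw [greedy]
  intro hcontra
  apply mex_not_mem (((Finset.univ.filter (fun u => H.Adj u v ∧ ord u < ord v)).attach).image
    (fun u => greedy H ord u.1))
  rw [hcontra]
  exact Finset.mem_image.mpr ⟨⟨u, by simp [hadj, hlt]⟩, Finset.mem_attach _ _, rfl⟩

lemma greedy_proper {V : Type} [Fintype V] (H : SimpleGraph V) (ord : V → ℕ)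
    (hinj : Function.Injective ord) {u v : V} (hadj : H.Adj u v) :
    greedy H ord u ≠ greedy H ord v := by
  rcases lt_trichotomy (ord u) (ord v) with h | h | h
  · exact (greedy_ne H ord hadj h).symm
  · exact absurd (hinj h) (H.ne_of_adj hadj)
  · exact greedy_ne H ord hadj.symm h

lemma mod_ne_of_window {r r' Δ : ℕ} (h1 : r' < r) (h2 : r < r' + Δ) : r % Δ ≠ r' % Δ := by
  intro h
  have hdvd : Δ ∣ r - r' := (Nat.modEq_iff_dvd' h1.le).mp h.symm
  have : Δ ≤ r - r' := Nat.le_of_dvd (by omega) hdvd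
  omega

lemma part1 {V : Type} [Fintype V] (G : SimpleGraph V) [DecidableRel G.Adj]
    (A B : Set V) (ordB : V → ℕ)
    (hBip : G.IsBipartitionOf A B) (hConv : G.IsConvexityOrder A B ordB)
    (hΔ1 : 1 ≤ G.maxDegree) :
    G.square.chromaticNumber ≤ ((2 * G.maxDegree : ℕ) : ℕ∞) := by
  classical
  obtain ⟨hcover, hdisj, hedge⟩ := hBip
  obtain ⟨hinjB, hconv⟩ := hConv
  set Δ := G.maxDegree with hΔdef
  -- helper: adjacency directions
  have hadjAB : ∀ {a b : V}, a ∈ A → G.Adj a b → b ∈ B := by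
    intro a b ha hab
    rcases hedge hab with ⟨_, hb⟩ | ⟨ha', _⟩
    · exact hb
    · exact absurd ha (Set.disjoint_right.mp hdisj ha')
  have hadjBA : ∀ {a b : V}, b ∈ B → G.Adj a b → a ∈ A := by
    intro a b hb hab
    rcases hedge hab with ⟨ha, _⟩ | ⟨_, hb'⟩
    · exact ha
    · exact absurd hb (Set.disjoint_left.mp hdisj hb')
  have hnoAA : ∀ {u v : V}, u ∈ A → v ∈ A → ¬ G.Adj u v := by
    intro u v hu hv h
    exact Set.disjoint_left.mp hdisj hv (hadjAB hu h)
  have hnoBB : ∀ {u v : V}, u ∈ B → v ∈ B → ¬ G.Adj u v := by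
    intro u v hu hv h
    exact Set.disjoint_left.mp hdisj (hadjBA hv h) hu
  -- rank function on B
  set rank : V → ℕ := fun b => (Finset.univ.filter (fun x => x ∈ B ∧ ordB x < ordB b)).card
    with hrank
  have rank_strict : ∀ {b b' : V}, b ∈ B → ordB b < ordB b' → rank b < rank b' := by
    intro b b' hb h
    apply Finset.card_lt_card
    constructor
    · intro x hx
      simp only [Finset.mem_filter] at hx ⊢
      exact ⟨hx.1, hx.2.1, hx.2.2.trans h⟩
    · intro hsub
      have := hsub (by simp [hb, h] : b ∈ Finset.univ.filter (fun x => x ∈ B ∧ ordB x < ordB b'))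
      simp at this
  -- window lemma
  have hwindow : ∀ a ∈ A, ∀ b b' : V, G.Adj a b → G.Adj a b' → ordB b' ≤ ordB b →
      rank b < rank b' + Δ := by
    intro a ha b b' hab hab' hle
    have hbB : b ∈ B := hadjAB ha hab
    have hb'B : b' ∈ B := hadjAB ha hab'
    set D := Finset.univ.filter (fun x => x ∈ B ∧ ordB b' ≤ ordB x ∧ ordB x < ordB b) with hD
    have hsub : Finset.univ.filter (fun x => x ∈ B ∧ ordB x < ordB b)
        ⊆ Finset.univ.filter (fun x => x ∈ B ∧ ordB x < ordB b') ∪ D := by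
      intro x hx
      simp only [Finset.mem_filter, Finset.mem_union, hD] at hx ⊢
      obtain ⟨hu, hxB, hxlt⟩ := hx
      rcases lt_or_ge (ordB x) (ordB b') with hcase | hcase
      · exact Or.inl ⟨hu, hxB, hcase⟩
      · exact Or.inr ⟨hu, hxB, hcase, hxlt⟩
    have h1 : rank b ≤ rank b' + D.card := by
      calc rank b ≤ (Finset.univ.filter (fun x => x ∈ B ∧ ordB x < ordB b') ∪ D).card :=
            Finset.card_le_card hsub
        _ ≤ rank b' + D.card := Finset.card_union_le _ _
    have hDsub : D ⊆ (G.neighborFinset a).erase b := by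
      intro x hx
      simp only [hD, Finset.mem_filter] at hx
      obtain ⟨-, hxB, h1x, h2x⟩ := hx
      have hadj : G.Adj a x := hconv a ha b' hb'B x hxB b hbB hab' hab h1x h2x.le
      refine Finset.mem_erase.mpr ⟨?_, (G.mem_neighborFinset a x).mpr hadj⟩
      intro hxb; subst hxb; omega
    have hbmem : b ∈ G.neighborFinset a := (G.mem_neighborFinset a b).mpr hab
    have h2 : D.card ≤ G.degree a - 1 := by
      have := Finset.card_le_card hDsub
      rwa [Finset.card_erase_of_mem hbmem] at this
    have h3 : G.degree a ≤ Δ := G.degree_le_maxDegree a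
    have h4 : 1 ≤ G.degree a := by
      rw [← SimpleGraph.card_neighborFinset_eq_degree]
      exact Finset.card_pos.mpr ⟨b, hbmem⟩
    omega
  -- the index / key for A-side ordering
  set M := Fintype.card V + 1 with hM
  set idx : V → ℕ := fun v => ((Fintype.equivFin V) v : ℕ) with hidx
  have hidxlt : ∀ v, idx v < M := fun v => by
    simp only [hidx, hM]; have := ((Fintype.equivFin V) v).2; omega
  have hidxinj : Function.Injective idx := by
    intro u v h
    exact (Fintype.equivFin V).injective (Fin.ext h)
  set key : V → ℕ := fun a =>
    if h : (G.neighborFinset a).Nonempty then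
      ((G.neighborFinset a).image ordB).min' (h.image _) else 0 with hkey
  have hkeyspec : ∀ a : V, (G.neighborFinset a).Nonempty →
      (∃ b ∈ G.neighborFinset a, ordB b = key a) ∧
        ∀ b' ∈ G.neighborFinset a, key a ≤ ordB b' := by
    intro a h
    constructor
    · have := Finset.min'_mem ((G.neighborFinset a).image ordB) (h.image _)
      rw [Finset.mem_image] at this
      obtain ⟨b, hb, hb'⟩ := this
      exact ⟨b, hb, by simp only [hkey, dif_pos h]; exact hb'⟩
    · intro b' hb'
      simp only [hkey, dif_pos h]
      exact Finset.min'_le _ _ (Finset.mem_image_of_mem _ hb')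
  set ordA : V → ℕ := fun a => key a * M + idx a with hordA
  have hordAinj : Function.Injective ordA := by
    intro u v h
    apply hidxinj
    have h1 := hidxlt u
    have h2 := hidxlt v
    have e1 : ordA u % M = idx u := by
      have he : ordA u = key u * M + idx u := rfl
      rw [he, Nat.mul_comm, Nat.mul_add_mod, Nat.mod_eq_of_lt h1]
    have e2 : ordA v % M = idx v := by
      have he : ordA v = key v * M + idx v := rfl
      rw [he, Nat.mul_comm, Nat.mul_add_mod, Nat.mod_eq_of_lt h2]
    rw [← e1, ← e2, h]
  have hordAkey : ∀ {u v : V}, ordA u < ordA v → key u ≤ key v := by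
    intro u v h
    by_contra hc
    push_neg at hc
    have : ordA v < ordA u := by
      have h1 := hidxlt v
      calc ordA v = key v * M + idx v := rfl
        _ < (key v + 1) * M := by ring_nf; omega
        _ ≤ key u * M := Nat.mul_le_mul_right M hc
        _ ≤ ordA u := Nat.le_add_right _ _
    omega
  -- the graph on the A-side
  set HA : SimpleGraph V :=
    { Adj := fun u v => G.square.Adj u v ∧ u ∈ A ∧ v ∈ A
      symm := ⟨fun u v h => ⟨h.1.symm, h.2.2, h.2.1⟩⟩
      loopless := ⟨fun v h => G.square.loopless.irrefl v h.1⟩ } with hHA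
  -- bound on earlier neighbors
  have hbound : ∀ v : V,
      (Finset.univ.filter (fun u => HA.Adj u v ∧ ordA u < ordA v)).card < Δ := by
    intro v
    by_cases hvA : v ∈ A
    · by_cases hN : (G.neighborFinset v).Nonempty
      · obtain ⟨⟨b, hbN, hbkey⟩, hmin⟩ := hkeyspec v hN
        have hbv : G.Adj v b := (G.mem_neighborFinset v b).mp hbN
        have hbB : b ∈ B := hadjAB hvA hbv
        have hsub : Finset.univ.filter (fun u => HA.Adj u v ∧ ordA u < ordA v)
            ⊆ (G.neighborFinset b).erase v := by
          intro u hu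
          simp only [Finset.mem_filter] at hu
          obtain ⟨-, ⟨⟨hne, hor⟩, huA, -⟩, hlt⟩ := hu
          rcases hor with h | ⟨w, huw, hwv⟩
          · exact absurd h (hnoAA huA hvA)
          · have hvw : G.Adj v w := hwv.symm
            have hwB : w ∈ B := hadjAB hvA hvw
            have hwN : w ∈ G.neighborFinset v := (G.mem_neighborFinset v w).mpr hvw
            have hNu : (G.neighborFinset u).Nonempty :=
              ⟨w, (G.mem_neighborFinset u w).mpr huw⟩
            obtain ⟨⟨bu, hbuN, hbukey⟩, -⟩ := hkeyspec u hNu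
            have hubu : G.Adj u bu := (G.mem_neighborFinset u bu).mp hbuN
            have hbuB : bu ∈ B := hadjAB huA hubu
            have h1 : ordB bu ≤ ordB b := by
              rw [hbukey, hbkey]; exact hordAkey hlt
            have h2 : ordB b ≤ ordB w := by rw [hbkey]; exact hmin w hwN
            have hub : G.Adj u b := hconv u huA bu hbuB b hbB w hwB hubu huw h1 h2
            exact Finset.mem_erase.mpr ⟨hne, (G.mem_neighborFinset b u).mpr hub.symm⟩
        have hvmem : v ∈ G.neighborFinset b := (G.mem_neighborFinset b v).mpr hbv.symm
        have h1 := Finset.card_le_card hsub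
        rw [Finset.card_erase_of_mem hvmem] at h1
        have h2 : G.degree b ≤ Δ := G.degree_le_maxDegree b
        have h3 : 1 ≤ G.degree b := by
          rw [← SimpleGraph.card_neighborFinset_eq_degree]
          exact Finset.card_pos.mpr ⟨v, hvmem⟩
        have : (G.neighborFinset b).card = G.degree b := rfl
        omega
      · have : Finset.univ.filter (fun u => HA.Adj u v ∧ ordA u < ordA v) = ∅ := by
          rw [Finset.filter_eq_empty_iff]
          intro u _
          rintro ⟨⟨⟨hne, hor⟩, -, -⟩, -⟩
          rcases hor with h | ⟨w, _, hwv⟩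
          · exact hN ⟨u, (G.mem_neighborFinset v u).mpr h.symm⟩
          · exact hN ⟨w, (G.mem_neighborFinset v w).mpr hwv.symm⟩
        rw [this]; simpa using Nat.lt_of_lt_of_le Nat.zero_lt_one hΔ1
    · have : Finset.univ.filter (fun u => HA.Adj u v ∧ ordA u < ordA v) = ∅ := by
        rw [Finset.filter_eq_empty_iff]
        intro u _
        rintro ⟨⟨-, -, hv⟩, -⟩
        exact hvA hv
      rw [this]; simpa using Nat.lt_of_lt_of_le Nat.zero_lt_one hΔ1
  -- define the coloring
  have h2Δ : 0 < 2 * Δ := by omega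
  set c : V → Fin (2 * Δ) := fun v =>
    if v ∈ A then ⟨greedy HA ordA v, by
      have := greedy_lt HA ordA v Δ (by convert hbound v)
      omega⟩
    else ⟨Δ + rank v % Δ, by have := Nat.mod_lt (rank v) (show 0 < Δ by omega); omega⟩
    with hc
  -- B-side properness helper
  have hBside : ∀ u v : V, u ∈ B → v ∈ B → (∃ a, G.Adj u a ∧ G.Adj a v) →
      ordB u < ordB v → Δ + rank u % Δ ≠ Δ + rank v % Δ := by
    intro u v huB hvB ⟨a, hua, hav⟩ hlt
    have haA : a ∈ A := hadjBA huB hua.symm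
    have h1 : rank u < rank v := rank_strict huB hlt
    have h2 : rank v < rank u + Δ := hwindow a haA v u hav hua.symm hlt.le
    have := mod_ne_of_window h1 h2
    omega
  -- properness
  have hproper : ∀ {u v : V}, G.square.Adj u v → c u ≠ c v := by
    intro u v hsq
    obtain ⟨hne, hor⟩ := hsq
    by_cases huA : u ∈ A <;> by_cases hvA : v ∈ A
    · have hHAadj : HA.Adj u v := ⟨⟨hne, hor⟩, huA, hvA⟩
      have := greedy_proper HA ordA hordAinj hHAadj
      simp only [hc, if_pos huA, if_pos hvA, Ne, Fin.mk.injEq]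
      exact this
    · have hg : greedy HA ordA u < Δ := greedy_lt HA ordA u Δ (by convert hbound u)
      simp only [hc, if_pos huA, if_neg hvA, Ne, Fin.mk.injEq]
      omega
    · have hg : greedy HA ordA v < Δ := greedy_lt HA ordA v Δ (by convert hbound v)
      simp only [hc, if_neg huA, if_pos hvA, Ne, Fin.mk.injEq]
      omega
    · have huB : u ∈ B := (hcover u).resolve_left huA
      have hvB : v ∈ B := (hcover v).resolve_left hvA
      have hcomm : ∃ a, G.Adj u a ∧ G.Adj a v := by
        rcases hor with h | h
        · exact absurd h (hnoBB huB hvB)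
        · exact h
      simp only [hc, if_neg huA, if_neg hvA, Ne, Fin.mk.injEq]
      rcases lt_trichotomy (ordB u) (ordB v) with h | h | h
      · exact hBside u v huB hvB hcomm h
      · exact absurd (hinjB huB hvB h) hne
      · obtain ⟨a, h1, h2⟩ := hcomm
        exact (hBside v u hvB huB ⟨a, h2.symm, h1.symm⟩ h).symm
  have hcolorable : G.square.Colorable (2 * Δ) :=
    ⟨SimpleGraph.Coloring.mk c fun h => hproper h⟩
  exact hcolorable.chromaticNumber_le


lemma part2 (n : ℕ) :
    @SimpleGraph.maxDegree _ (completeBipartiteGraph (Fin n) (Fin n)) _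
        (Classical.decRel _) = n ∧
      (completeBipartiteGraph (Fin n) (Fin n)).square.chromaticNumber
        = ((2 * n : ℕ) : ℕ∞) := by
  classical
  rcases Nat.eq_zero_or_pos n with hn | hn
  · subst hn
    have hempty : IsEmpty (Fin 0 ⊕ Fin 0) := by infer_instance
    constructor
    · simp only [SimpleGraph.maxDegree, Finset.univ_eq_empty, Finset.image_empty]
      rfl
    · rw [SimpleGraph.chromaticNumber_eq_zero_of_isEmpty]
      simp
  · set K := completeBipartiteGraph (Fin n) (Fin n) with hK
    letI : DecidableRel K.Adj := Classical.decRel _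
    have hdeg : ∀ v : Fin n ⊕ Fin n, K.degree v = n := by
      intro v
      rw [← SimpleGraph.card_neighborFinset_eq_degree]
      cases v with
      | inl i =>
        have : K.neighborFinset (Sum.inl i) = Finset.univ.image Sum.inr := by
          ext w
          cases w <;> simp [hK, completeBipartiteGraph]
        rw [this, Finset.card_image_of_injective _ Sum.inr_injective]
        simp
      | inr i =>
        have : K.neighborFinset (Sum.inr i) = Finset.univ.image Sum.inl := by
          ext w
          cases w <;> simp [hK, completeBipartiteGraph]
        rw [this, Finset.card_image_of_injective _ Sum.inl_injective]
        simp
    constructor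
    · apply le_antisymm
      · exact SimpleGraph.maxDegree_le_of_forall_degree_le _ _ fun v => (hdeg v).le
      · have := SimpleGraph.degree_le_maxDegree K (Sum.inl ⟨0, hn⟩)
        rwa [hdeg] at this
    · have hsq : K.square = ⊤ := by
        ext u v
        simp only [SimpleGraph.square, SimpleGraph.top_adj]
        constructor
        · rintro ⟨h, -⟩; exact h
        · intro h
          refine ⟨h, ?_⟩
          rcases u with i | i <;> rcases v with j | j
          · exact Or.inr ⟨Sum.inr ⟨0, hn⟩, by simp [hK, completeBipartiteGraph]⟩
          · exact Or.inl (by simp [hK, completeBipartiteGraph])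
          · exact Or.inl (by simp [hK, completeBipartiteGraph])
          · exact Or.inr ⟨Sum.inl ⟨0, hn⟩, by simp [hK, completeBipartiteGraph]⟩
      rw [hsq, SimpleGraph.chromaticNumber_top]
      simp
      ring



/-- For a finite convex bipartite graph `G` with maximum degree `Δ ≥ 1`,
`χ(G²) ≤ 2Δ`; moreover, for the complete bipartite graph `K_{n,n}` (which is
convex bipartite with `Δ = n`) one has `χ((K_{n,n})²) = 2n`, so the bound is tight. -/
theorem chromaticNumber_square_le_two_mul_maxDegree :
    (∀ (V : Type) [Fintype V] (G : SimpleGraph V) [DecidableRel G.Adj]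
      (A B : Set V) (ordB : V → ℕ),
      G.IsBipartitionOf A B → G.IsConvexityOrder A B ordB → 1 ≤ G.maxDegree →
      G.square.chromaticNumber ≤ ((2 * G.maxDegree : ℕ) : ℕ∞)) ∧
    (∀ n : ℕ,
      @SimpleGraph.maxDegree _ (completeBipartiteGraph (Fin n) (Fin n)) _
        (Classical.decRel _) = n ∧
      (completeBipartiteGraph (Fin n) (Fin n)).square.chromaticNumber
        = ((2 * n : ℕ) : ℕ∞)) :=
  ⟨fun V _ G _ A B ordB h1 h2 h3 => part1 G A B ordB h1 h2 h3, part2⟩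
end

section
/- Let G = (A, B, E) be a bipartite graph such that neither G²[A] nor G²[B] contains an induced complement of a cycle of odd length greater than five. Then G² does not contain an induced complement of a cycle of odd length greater than five. -/
/-- A graph contains an odd anti-hole of size larger than five: an induced copy of
the complement of a cycle of odd length at least seven. -/
def SimpleGraph.HasLargeOddAntihole {W : Type*} (H : SimpleGraph W) : Prop :=
  ∃ n : ℕ, 7 ≤ n ∧ Odd n ∧ Nonempty ((SimpleGraph.cycleGraph n)ᶜ ↪g H)

open Fin.NatCast Fin.CommRing

open SimpleGraph in
private lemma antihole_adj_aux {m : ℕ} (p : Fin (m + 2)) (k : ℕ) (h2 : 2 ≤ k) (hk : k ≤ m) :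
    ((SimpleGraph.cycleGraph (m + 2))ᶜ).Adj p (p + (k : Fin (m + 2))) := by
  have hkv : ((k : Fin (m + 2)) : ℕ) = k := by
    rw [Fin.val_natCast, Nat.mod_eq_of_lt (by omega)]
  have hk1v : (((k + 1 : ℕ) : Fin (m + 2)) : ℕ) = k + 1 := by
    rw [Fin.val_natCast, Nat.mod_eq_of_lt (by omega)]
  rw [compl_adj]
  refine ⟨?_, ?_⟩
  · intro h
    have h0 : (k : Fin (m + 2)) = 0 := by
      have := congrArg (fun x => x - p) h
      simpa using this.symm
    have := congrArg Fin.val h0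
    simp only [hkv, Fin.val_zero] at this
    omega
  · rw [cycleGraph_adj]
    push_neg
    constructor
    · intro h
      have h' : ((k + 1 : ℕ) : Fin (m + 2)) = 0 := by
        have : (0 : Fin (m+2)) = p - (p + (k : Fin (m+2))) + (k : Fin (m+2)) := by ring
        rw [h] at this
        push_cast
        rw [show ((k : Fin (m+2)) + 1) = 1 + (k : Fin (m+2)) from add_comm _ _]
        exact this.symm
      have := congrArg Fin.val h'
      simp only [hk1v, Fin.val_zero] at this
      omega
    · intro h
      have h' : (k : Fin (m + 2)) = 1 := by
        have : p + (k : Fin (m+2)) - p = (k : Fin (m+2)) := by ring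
        rw [h] at this; exact this.symm
      have := congrArg Fin.val h'
      simp only [hkv, Fin.val_one] at this
      omega


/-- If `G = (A,B,E)` is bipartite and neither `G²[A]` nor `G²[B]` contains an odd
anti-hole of size larger than five, then neither does `G²`. -/
theorem square_no_large_odd_antihole {V : Type*} (G : SimpleGraph V) (A B : Set V)
    (hbip : G.IsBipartitionOf A B)
    (hA : ¬ (G.square.induce A).HasLargeOddAntihole)
    (hB : ¬ (G.square.induce B).HasLargeOddAntihole) :
    ¬ G.square.HasLargeOddAntihole := by
  classical
  rintro ⟨n, hn, hodd, ⟨f⟩⟩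
  obtain ⟨hcover, hdisj, hedge⟩ := hbip
  obtain ⟨m, rfl⟩ : ∃ m, n = m + 2 := ⟨n - 2, by omega⟩
  have hm : 5 ≤ m := by omega
  have hdAB : ∀ {x}, x ∈ A → x ∉ B := fun h => Set.disjoint_left.mp hdisj h
  -- cross-edge lemma
  have cross : ∀ {u v}, u ∈ A → v ∈ B → G.square.Adj u v → G.Adj u v := by
    rintro u v hu hv ⟨-, h | ⟨w, h1, h2⟩⟩
    · exact h
    · exfalso
      rcases hedge h1 with ⟨-, hwB⟩ | ⟨huB, -⟩
      · rcases hedge h2 with ⟨hwA, -⟩ | ⟨-, hvA⟩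
        · exact hdAB hwA hwB
        · exact hdAB hvA hv
      · exact hdAB hu huB
  set anti := (SimpleGraph.cycleGraph (m + 2))ᶜ with hanti
  set c : Fin (m + 2) → Bool := fun i => decide (f i ∈ A) with hc
  have hcA : ∀ i, c i = true → f i ∈ A := fun i h => of_decide_eq_true h
  have hcB : ∀ i, c i = false → f i ∈ B :=
    fun i h => (hcover (f i)).resolve_left (of_decide_eq_false h)
  -- key lemma: two antihole-neighbors of an opposite-side vertex, lying on the same
  -- side, are adjacent in the antihole
  have key : ∀ q q' r : Fin (m + 2), anti.Adj r q → anti.Adj r q' → q ≠ q' →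
      c q = c q' → c q ≠ c r → anti.Adj q q' := by
    intro q q' r h1 h2 hne hqq hqr
    have s1 : G.square.Adj (f q) (f r) := (f.map_rel_iff.mpr h1).symm
    have s2 : G.square.Adj (f q') (f r) := (f.map_rel_iff.mpr h2).symm
    have hadj : G.Adj (f q) (f r) ∧ G.Adj (f q') (f r) := by
      cases hq : c q with
      | true =>
        have hr : c r = false := by cases hr : c r <;> simp_all
        exact ⟨cross (hcA q hq) (hcB r hr) s1, cross (hcA q' (hqq ▸ hq)) (hcB r hr) s2⟩
      | false =>
        have hr : c r = true := by cases hr : c r <;> simp_all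
        exact ⟨(cross (hcA r hr) (hcB q hq) s1.symm).symm,
          (cross (hcA r hr) (hcB q' (hqq ▸ hq)) s2.symm).symm⟩
    have : G.square.Adj (f q) (f q') :=
      ⟨f.injective.ne hne, Or.inr ⟨f r, hadj.1, hadj.2.symm⟩⟩
    exact f.map_rel_iff.mp this
  -- consecutive vertices of the cycle are non-adjacent in the antihole
  have consec : ∀ q : Fin (m + 2), (SimpleGraph.cycleGraph (m + 2)).Adj q (q + 1) := by
    intro q
    rw [SimpleGraph.cycleGraph_adj]
    right; ring
  -- the mixed-pair propagation step
  have step : ∀ (p : Fin (m + 2)) (k : ℕ), 3 ≤ k → k + 1 ≤ m → c p ≠ c (p + 1) →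
      c (p + (k : Fin (m + 2))) ≠ c (p + (k : Fin (m + 2)) + 1) := by
    intro p k h3 hk1 hmix heq
    set q := p + (k : Fin (m + 2)) with hq
    have hcast1 : ((k + 1 : ℕ) : Fin (m + 2)) = (k : Fin (m + 2)) + 1 := by push_cast; ring
    have hcast2 : ((k - 1 : ℕ) : Fin (m + 2)) = (k : Fin (m + 2)) - 1 := by
      push_cast [Nat.cast_sub (by omega : 1 ≤ k)]; ring
    have Aq : anti.Adj p q := antihole_adj_aux p k (by omega) (by omega)
    have Aq1 : anti.Adj p (q + 1) := by
      have := antihole_adj_aux p (k + 1) (by omega) (by omega)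
      rwa [hcast1, ← add_assoc] at this
    have Bq : anti.Adj (p + 1) q := by
      have := antihole_adj_aux (p + 1) (k - 1) (by omega) (by omega)
      rw [hcast2] at this
      have e : p + 1 + ((k : Fin (m + 2)) - 1) = q := by rw [hq]; ring
      rwa [e] at this
    have Bq1 : anti.Adj (p + 1) (q + 1) := by
      have := antihole_adj_aux (p + 1) k (by omega) (by omega)
      have e : p + 1 + (k : Fin (m + 2)) = q + 1 := by rw [hq]; ring
      rwa [e] at this
    have hne : q ≠ q + 1 := (consec q).ne
    have hnadj : ¬ anti.Adj q (q + 1) := by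
      rw [hanti, SimpleGraph.compl_adj]
      push_neg
      intro _; exact consec q
    have hpick : c q ≠ c p ∨ c q ≠ c (p + 1) := by
      cases h1 : c p <;> cases h2 : c (p + 1) <;> cases h3 : c q <;> simp_all
    rcases hpick with hr | hr
    · exact hnadj (key q (q + 1) p Aq Aq1 hne heq hr)
    · exact hnadj (key q (q + 1) (p + 1) Bq Bq1 hne heq hr)
  -- case split: is the coloring constant along the cycle?
  by_cases hconst : ∀ p : Fin (m + 2), c p = c (p + 1)
  · -- constant coloring: the antihole lies entirely in A or in B
    have hall : ∀ i : Fin (m + 2), c i = c 0 := by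
      intro i
      have aux : ∀ k : ℕ, c ((k : ℕ) : Fin (m + 2)) = c 0 := by
        intro k
        induction k with
        | zero => norm_num
        | succ k ih =>
          have e : ((k + 1 : ℕ) : Fin (m + 2)) = ((k : ℕ) : Fin (m + 2)) + 1 := by
            push_cast; ring
          rw [e, ← hconst]; exact ih
      have := aux i.val
      rwa [Fin.cast_val_eq_self i] at this
    cases h0 : c 0 with
    | true =>
      refine hA ⟨m + 2, hn, hodd, ⟨⟨⟨fun i => ⟨f i, hcA i ((hall i).trans h0)⟩, ?_⟩, ?_⟩⟩⟩
      · intro i j h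
        exact f.injective (congrArg Subtype.val h)
      · intro i j
        exact f.map_rel_iff
    | false =>
      refine hB ⟨m + 2, hn, hodd, ⟨⟨⟨fun i => ⟨f i, hcB i ((hall i).trans h0)⟩, ?_⟩, ?_⟩⟩⟩
      · intro i j h
        exact f.injective (congrArg Subtype.val h)
      · intro i j
        exact f.map_rel_iff
  · -- mixed pair exists: propagate to all pairs, contradict oddness
    push_neg at hconst
    obtain ⟨p0, hp0⟩ := hconst
    have g3 : ∀ (x : ℕ) (p : Fin (m + 2)), c p ≠ c (p + 1) →
        c (p + ((3 * x : ℕ) : Fin (m + 2))) ≠ c (p + ((3 * x : ℕ) : Fin (m + 2)) + 1) := by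
      intro x
      induction x with
      | zero => intro p hp; simpa using hp
      | succ x ih =>
        intro p hp
        have e : ((3 * (x + 1) : ℕ) : Fin (m + 2))
            = ((3 * x : ℕ) : Fin (m + 2)) + ((3 : ℕ) : Fin (m + 2)) := by push_cast; ring
        rw [e, ← add_assoc]
        exact step (p + ((3 * x : ℕ) : Fin (m + 2))) 3 (by omega) (by omega) (ih p hp)
    have g4 : ∀ (y : ℕ) (p : Fin (m + 2)), c p ≠ c (p + 1) →
        c (p + ((4 * y : ℕ) : Fin (m + 2))) ≠ c (p + ((4 * y : ℕ) : Fin (m + 2)) + 1) := by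
      intro y
      induction y with
      | zero => intro p hp; simpa using hp
      | succ y ih =>
        intro p hp
        have e : ((4 * (y + 1) : ℕ) : Fin (m + 2))
            = ((4 * y : ℕ) : Fin (m + 2)) + ((4 : ℕ) : Fin (m + 2)) := by push_cast; ring
        rw [e, ← add_assoc]
        exact step (p + ((4 * y : ℕ) : Fin (m + 2))) 4 (by omega) (by omega) (ih p hp)
    have gall : ∀ x y : ℕ, c (p0 + ((3 * x + 4 * y : ℕ) : Fin (m + 2)))
        ≠ c (p0 + ((3 * x + 4 * y : ℕ) : Fin (m + 2)) + 1) := by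
      intro x y
      have e : ((3 * x + 4 * y : ℕ) : Fin (m + 2))
          = ((3 * x : ℕ) : Fin (m + 2)) + ((4 * y : ℕ) : Fin (m + 2)) := by push_cast; ring
      rw [e, ← add_assoc]
      exact g4 y (p0 + ((3 * x : ℕ) : Fin (m + 2))) (g3 x p0 hp0)
    have rep : ∀ a : ℕ, 6 ≤ a → ∃ x y, a = 3 * x + 4 * y := by
      intro a ha
      obtain h | h | h : a % 3 = 0 ∨ a % 3 = 1 ∨ a % 3 = 2 := by omega
      · exact ⟨a / 3, 0, by omega⟩
      · exact ⟨(a - 4) / 3, 1, by omega⟩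
      · exact ⟨(a - 8) / 3, 2, by omega⟩
    have allMixed : ∀ q : Fin (m + 2), c q ≠ c (q + 1) := by
      intro q
      set a : ℕ := (q - p0).val + (m + 2) with ha
      obtain ⟨x, y, hxy⟩ := rep a (by omega)
      have e : p0 + ((a : ℕ) : Fin (m + 2)) = q := by
        have e2 : ((a : ℕ) : Fin (m + 2)) = q - p0 := by
          rw [ha, Nat.cast_add, Fin.natCast_self, add_zero, Fin.cast_val_eq_self]
        rw [e2]; ring
      rw [← e, hxy]
      exact gall x y
    have btrans : ∀ x y z : Bool, x ≠ y → x ≠ z → y = z := by decide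
    have par : ∀ k : ℕ, (Even k → c ((k : ℕ) : Fin (m + 2)) = c 0) ∧
        (¬ Even k → c ((k : ℕ) : Fin (m + 2)) ≠ c 0) := by
      intro k
      induction k with
      | zero => exact ⟨fun _ => by norm_num, fun h => absurd Even.zero h⟩
      | succ k ih =>
        have e : ((k + 1 : ℕ) : Fin (m + 2)) = ((k : ℕ) : Fin (m + 2)) + 1 := by
          push_cast; ring
        have hmx := allMixed ((k : ℕ) : Fin (m + 2))
        constructor
        · intro hev
          have hk : ¬ Even k := by rw [Nat.even_add_one] at hev; exact hev
          rw [e]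
          exact btrans _ _ _ hmx (ih.2 hk)
        · intro hev
          have hk : Even k := by rw [Nat.even_add_one, not_not] at hev; exact hev
          rw [e]
          intro hcon
          exact hmx ((ih.1 hk).trans hcon.symm)
    have hne : ¬ Even (m + 2) := Nat.not_even_iff_odd.mpr hodd
    have := (par (m + 2)).2 hne
    rw [Fin.natCast_self] at this
    exact this rfl
end

section
/- Let G = (A, B, E) be a convex bipartite graph with orderings <_A and <_B, and let P = (a_1, ..., a_k), k ≥ 2, be an (A, b, b')-path in G² with a_1 <_A a_k. Then b <_B b', and a_1 is the <_A-minimum vertex of P. -/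
/-- `(p 0, …, p (k-1))` is an `(A, b, b')`-path in `G²`: an induced path in `G²`
with all vertices in `A`, where `b ∈ B` is a `G`-neighbor of exactly the first
vertex and `b' ∈ B` is a `G`-neighbor of exactly the last vertex, `b ≠ b'`. -/
structure SimpleGraph.IsABPath {V : Type*} (G : SimpleGraph V) (A B : Set V)
    (k : ℕ) (p : Fin k → V) (b b' : V) : Prop where
  two_le : 2 ≤ k
  mem_A : ∀ i, p i ∈ A
  inj : Function.Injective p
  induced : ∀ i j : Fin k, (i : ℕ) < (j : ℕ) →
    (G.square.Adj (p i) (p j) ↔ (j : ℕ) = (i : ℕ) + 1)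
  b_mem : b ∈ B
  b'_mem : b' ∈ B
  b_ne : b ≠ b'
  b_first : ∀ i : Fin k, G.Adj (p i) b ↔ (i : ℕ) = 0
  b'_last : ∀ i : Fin k, G.Adj (p i) b' ↔ (i : ℕ) = k - 1

/-- For an `(A, b, b')`-path `P = (a_1, …, a_k)` in the square of a convex bipartite
graph with `a_1 <_A a_k`, we have `b <_B b'` and `a_1` is the `<_A`-minimum of `P`. -/
theorem abPath_order {V : Type*} (G : SimpleGraph V) (A B : Set V)
    (ordA ordB : V → ℕ) (hbip : G.IsBipartitionOf A B)
    (hconv : G.IsConvexityOrder A B ordB)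
    (hord : G.IsRightEndpointOrder A B ordA ordB)
    (k : ℕ) (hk : 2 ≤ k) (p : Fin k → V) (b b' : V)
    (hP : G.IsABPath A B k p b b')
    (hfirstlast : ordA (p ⟨0, by omega⟩) < ordA (p ⟨k - 1, by omega⟩)) :
    ordB b < ordB b' ∧ ∀ i : Fin k, ordA (p ⟨0, by omega⟩) ≤ ordA (p i) := by
  set a0 : V := p ⟨0, by omega⟩ with ha0def
  set al : V := p ⟨k - 1, by omega⟩ with haldef
  have ha0A : a0 ∈ A := hP.mem_A _
  have halA : al ∈ A := hP.mem_A _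
  have hadj0b : G.Adj a0 b := (hP.b_first ⟨0, by omega⟩).mpr rfl
  have hlastb' : G.Adj al b' := (hP.b'_last ⟨k - 1, by omega⟩).mpr rfl
  -- every G-neighbor of a path vertex lies in B
  have hnB : ∀ i : Fin k, ∀ w, G.Adj (p i) w → w ∈ B := by
    intro i w h
    rcases hbip.2.2 h with ⟨_, hB⟩ | ⟨hB, _⟩
    · exact hB
    · exact absurd hB (Set.disjoint_left.mp hbip.2.1 (hP.mem_A i))
  -- consecutive path vertices have a common neighbor in B
  have hcn : ∀ i : Fin k, ∀ h : (i : ℕ) + 1 < k,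
      ∃ w, w ∈ B ∧ G.Adj (p i) w ∧ G.Adj (p ⟨(i : ℕ) + 1, h⟩) w := by
    intro i h
    have hadj : G.square.Adj (p i) (p ⟨(i : ℕ) + 1, h⟩) :=
      (hP.induced i ⟨(i : ℕ) + 1, h⟩ (by simp)).mpr (by simp)
    obtain ⟨hne, hc⟩ := hadj
    rcases hc with h1 | ⟨w, h1, h2⟩
    · exfalso
      rcases hbip.2.2 h1 with ⟨_, hB⟩ | ⟨hB, _⟩
      · exact absurd hB (Set.disjoint_left.mp hbip.2.1 (hP.mem_A _))
      · exact absurd hB (Set.disjoint_left.mp hbip.2.1 (hP.mem_A _))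
    · exact ⟨w, hnB i w h1, h1, h2.symm⟩
  -- Part 1 : ordB b < ordB b'
  have hbb' : ordB b < ordB b' := by
    by_contra h
    push_neg at h
    have hne : ordB b ≠ ordB b' := fun e => hP.b_ne (hconv.1 hP.b_mem hP.b'_mem e)
    have hlt : ordB b' < ordB b := by omega
    obtain ⟨c, hcB, hcadj, hbc⟩ :=
      hord.2 a0 ha0A al halA (le_of_lt hfirstlast) b hP.b_mem hadj0b
    have hadjb : G.Adj al b :=
      hconv.2 al halA b' hP.b'_mem b hP.b_mem c hcB hlastb' hcadj (le_of_lt hlt) hbc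
    have := (hP.b_first ⟨k - 1, by omega⟩).mp hadjb
    simp at this
    omega
  -- every neighbor of a non-first path vertex lies strictly right of b
  have key : ∀ m : ℕ, ∀ j : Fin k, (j : ℕ) + m = k - 1 → (j : ℕ) ≠ 0 →
      ∀ w, G.Adj (p j) w → ordB b < ordB w := by
    intro m
    induction m with
    | zero =>
      intro j hj hj0 w hw
      by_contra hle
      push_neg at hle
      have hb' : G.Adj (p j) b' := (hP.b'_last j).mpr (by omega)
      have hadjb : G.Adj (p j) b :=
        hconv.2 (p j) (hP.mem_A j) w (hnB j w hw) b hP.b_mem b' hP.b'_mem hw hb'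
          hle (le_of_lt hbb')
      exact hj0 ((hP.b_first j).mp hadjb)
    | succ m ih =>
      intro j hj hj0 w hw
      have hlt : (j : ℕ) + 1 < k := by omega
      obtain ⟨w', hw'B, h1, h2⟩ := hcn j hlt
      have hbw' : ordB b < ordB w' :=
        ih ⟨(j : ℕ) + 1, hlt⟩ (by simp; omega) (by simp) w' h2
      by_contra hle
      push_neg at hle
      have hadjb : G.Adj (p j) b :=
        hconv.2 (p j) (hP.mem_A j) w (hnB j w hw) b hP.b_mem w' hw'B hw h1
          hle (le_of_lt hbw')
      exact hj0 ((hP.b_first j).mp hadjb)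
  refine ⟨hbb', ?_⟩
  -- Part 2 : a0 is the minimum
  intro i
  by_contra h
  push_neg at h
  have hi0 : (i : ℕ) ≠ 0 := by
    intro e
    have : i = ⟨0, by omega⟩ := Fin.ext e
    rw [this] at h
    exact absurd h (lt_irrefl _)
  have hik : (i : ℕ) ≠ k - 1 := by
    intro e
    have : i = ⟨k - 1, by omega⟩ := Fin.ext e
    rw [this] at h
    exact absurd hfirstlast (lt_asymm h)
  have hiub : (i : ℕ) < k := i.2
  have hlt : (i : ℕ) + 1 < k := by omega
  obtain ⟨w, hwB, h1, h2⟩ := hcn i hlt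
  have hbw : ordB b < ordB w := key (k - 1 - (i : ℕ)) i (by omega) hi0 w h1
  obtain ⟨c, hcB, hc1, hc2⟩ :=
    hord.2 (p i) (hP.mem_A i) a0 ha0A (le_of_lt h) w hwB h1
  have haw : G.Adj a0 w :=
    hconv.2 a0 ha0A b hP.b_mem w hwB c hcB hadj0b hc1 (le_of_lt hbw) hc2
  have hsq1 : G.square.Adj a0 (p i) := by
    refine ⟨fun e => hi0 ?_, Or.inr ⟨w, haw, h1.symm⟩⟩
    have := hP.inj e
    exact (congrArg Fin.val this).symm
  have hsq2 : G.square.Adj a0 (p ⟨(i : ℕ) + 1, hlt⟩) := by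
    refine ⟨fun e => ?_, Or.inr ⟨w, haw, h2.symm⟩⟩
    have := congrArg Fin.val (hP.inj e)
    simp at this
  have e1 : (i : ℕ) = 0 + 1 := (hP.induced ⟨0, by omega⟩ i (by simp only [Fin.val_mk]; omega)).mp hsq1
  have e2 : (i : ℕ) + 1 = 0 + 1 := by
    have := (hP.induced ⟨0, by omega⟩ ⟨(i : ℕ) + 1, hlt⟩ (by simp only [Fin.val_mk]; omega)).mp hsq2
    simpa using this
  omega
end

section
/- Let G = (A, B, E) be a convex bipartite graph and let C be an induced cycle in G² of length k ≥ 4. Then exactly 2 vertices of C lie in B (the side with the consecutive-neighborhood ordering) and k − 2 vertices of C lie in A. Moreover, the vertices of C can be labeled (v_1, ..., v_k) so that (v_1, ..., v_{k−2}) is an (A, v_k, v_{k−1})-path. -/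
/-- `(c 0, …, c (k-1))` is an induced cycle in `H`: the vertices are distinct and
two of them are adjacent iff they are (cyclically) consecutive. -/
def SimpleGraph.IsInducedCycleOn {V : Type*} (H : SimpleGraph V) (k : ℕ)
    (c : Fin k → V) : Prop :=
  Function.Injective c ∧ ∀ i j : Fin k,
    H.Adj (c i) (c j) ↔ ((j : ℕ) = ((i : ℕ) + 1) % k ∨ (i : ℕ) = ((j : ℕ) + 1) % k)

open scoped Fin.NatCast Fin.IntCast Fin.CommRing

section Aux

variable {V : Type*} {G : SimpleGraph V} {A B : Set V} {ordB : V → ℕ}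

lemma ab_edge (hbip : G.IsBipartitionOf A B) {u v : V} (hu : u ∈ A) (hv : v ∈ B) :
    G.square.Adj u v ↔ G.Adj u v := by
  constructor
  · rintro ⟨hne, h | ⟨w, h1, h2⟩⟩
    · exact h
    · exfalso
      rcases hbip.2.2 h1 with ⟨_, hwB⟩ | ⟨huB, _⟩
      · rcases hbip.2.2 h2 with ⟨hwA, _⟩ | ⟨_, hvA⟩
        · exact Set.disjoint_left.mp hbip.2.1 hwA hwB
        · exact Set.disjoint_left.mp hbip.2.1 hvA hv
      · exact Set.disjoint_left.mp hbip.2.1 hu huB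
  · exact fun h => ⟨G.ne_of_adj h, Or.inl h⟩

lemma bb_edge (hbip : G.IsBipartitionOf A B) {u v : V} (hu : u ∈ B) (hv : v ∈ B)
    (h : G.square.Adj u v) : ∃ a ∈ A, G.Adj a u ∧ G.Adj a v := by
  rcases h with ⟨hne, h | ⟨w, h1, h2⟩⟩
  · exfalso
    rcases hbip.2.2 h with ⟨huA, _⟩ | ⟨_, hvA⟩
    · exact Set.disjoint_left.mp hbip.2.1 huA hu
    · exact Set.disjoint_left.mp hbip.2.1 hvA hv
  · rcases hbip.2.2 h1 with ⟨huA, _⟩ | ⟨_, hwA⟩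
    · exact absurd hu (Set.disjoint_left.mp hbip.2.1 huA)
    · exact ⟨w, hwA, h1.symm, h2⟩

lemma aa_edge (hbip : G.IsBipartitionOf A B) {u v : V} (hu : u ∈ A) (hv : v ∈ A)
    (h : G.square.Adj u v) : ∃ b ∈ B, G.Adj u b ∧ G.Adj v b := by
  rcases h with ⟨hne, h | ⟨w, h1, h2⟩⟩
  · exfalso
    rcases hbip.2.2 h with ⟨_, hvB⟩ | ⟨huB, _⟩
    · exact Set.disjoint_left.mp hbip.2.1 hv hvB
    · exact Set.disjoint_left.mp hbip.2.1 hu huB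
  · rcases hbip.2.2 h1 with ⟨_, hwB⟩ | ⟨huB, _⟩
    · exact ⟨w, hwB, h1, h2.symm⟩
    · exact absurd huB (Set.disjoint_left.mp hbip.2.1 hu)

lemma conv_between (hconv : G.IsConvexityOrder A B ordB) {a b₁ b₂ b : V}
    (ha : a ∈ A) (h₁ : b₁ ∈ B) (h₂ : b₂ ∈ B) (hb : b ∈ B)
    (e₁ : G.Adj a b₁) (e₂ : G.Adj a b₂)
    (hle : (ordB b₁ ≤ ordB b ∧ ordB b ≤ ordB b₂) ∨
           (ordB b₂ ≤ ordB b ∧ ordB b ≤ ordB b₁)) :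
    G.Adj a b := by
  rcases hle with ⟨h, h'⟩ | ⟨h, h'⟩
  · exact hconv.2 a ha b₁ h₁ b hb b₂ h₂ e₁ e₂ h h'
  · exact hconv.2 a ha b₂ h₂ b hb b₁ h₁ e₂ e₁ h h'

end Aux

lemma side_prop {V : Type*} {G : SimpleGraph V} {A B : Set V} {ordB : V → ℕ}
    (hbip : G.IsBipartitionOf A B) (hconv : G.IsConvexityOrder A B ordB)
    {k : ℕ} (hk : 4 ≤ k) [NeZero k] {c : Fin k → V} (hinj : Function.Injective c)
    (hadj : ∀ i j : Fin k, G.square.Adj (c i) (c j) ↔ j = i + 1 ∨ i = j + 1)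
    (t : Fin k) (htB : c t ∈ B) (ht1B : c (t + 1) ∈ B)
    (r : ℕ) (hr1 : 1 ≤ r) (hr2 : r ≤ k - 1) (hrB : c (t + (r : Fin k)) ∈ B) :
    (ordB (c (t + (r : Fin k))) < ordB (c t) ↔ ordB (c (t + 1)) < ordB (c t)) := by
  have hA_of : ∀ v, v ∉ B → v ∈ A := fun v h => (hbip.1 v).resolve_right h
  have hnB : ∀ {v}, v ∈ A → v ∉ B := fun hv hb => Set.disjoint_left.mp hbip.2.1 hv hb
  have hnc : ∀ m n : ℕ, m < k → n < k → ((m : Fin k) = (n : Fin k)) → m = n := by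
    intro m n hm hn h
    simpa [Nat.mod_eq_of_lt hm, Nat.mod_eq_of_lt hn] using congrArg Fin.val h
  have ha0 : ∀ n' : ℕ, n' < k → ((n' : ℕ) : Fin k) = 0 → n' = 0 := by
    intro n' h h'
    exact hnc n' 0 h (by omega) (by rw [h', Nat.cast_zero])
  have ha1 : ∀ n' : ℕ, n' < k → ((n' : ℕ) : Fin k) = 1 → n' = 1 := by
    intro n' h h'
    exact hnc n' 1 h (by omega) (by rw [h', Nat.cast_one])
  have hone0 : (1 : Fin k) ≠ 0 := by
    have hv : (1 : Fin k).val = 1 := by rw [Fin.val_one']; exact Nat.mod_eq_of_lt (by omega)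
    intro h; rw [h] at hv; simp at hv
  have hposne : ∀ i : Fin k, i ≠ t → c i ∈ B → ordB (c i) ≠ ordB (c t) :=
    fun i hne hiB h => hne (hinj (hconv.1 hiB htB h))
  have hadj_it : ∀ m : ℕ, 1 ≤ m → m ≤ k - 1 →
      G.square.Adj (c (t + (m : Fin k))) (c t) → (m = 1 ∨ m = k - 1) := by
    intro m hm1 hm2 hadj'
    rcases (hadj _ t).mp hadj' with h | h
    · have h0 : ((m + 1 : ℕ) : Fin k) = 0 := by push_cast; linear_combination -h
      rcases Nat.lt_or_ge (m + 1) k with hlt | hge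
      · exact absurd (ha0 _ hlt h0) (by omega)
      · right; omega
    · have h0 : ((m : ℕ) : Fin k) = 1 := by linear_combination h
      left; exact ha1 m (by omega) h0
  set R := ordB (c t) with hR
  have main : ∀ (lt : ℕ → ℕ → Prop),
      (∀ x, x ≠ R → lt x R ∨ lt R x) →
      (∀ x y, lt x R → lt R y → (x ≤ R ∧ R ≤ y) ∨ (y ≤ R ∧ R ≤ x)) →
      lt (ordB (c (t + 1))) R →
      ∀ n : ℕ, 1 ≤ n → n ≤ k - 1 → (n ≤ k - 2 ∨ c (t + (n : Fin k)) ∈ B) →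
        ((c (t + (n : Fin k)) ∈ B ∧ lt (ordB (c (t + (n : Fin k)))) R) ∨
         (c (t + (n : Fin k)) ∈ A ∧ ¬ G.Adj (c (t + (n : Fin k))) (c t) ∧
           ∀ b ∈ B, G.Adj (c (t + (n : Fin k))) b → lt (ordB b) R)) := by
    intro lt hcmp hbtw hstart n
    induction n with
    | zero => omega
    | succ m IH =>
      intro h1 h2 hside
      rcases Nat.eq_zero_or_pos m with rfl | hm1
      · have he1 : ((0 + 1 : ℕ) : Fin k) = 1 := by norm_num
        rw [he1]
        exact Or.inl ⟨ht1B, hstart⟩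
      · have hmk : m ≤ k - 2 := by omega
        have IH' := IH (by omega) (by omega) (Or.inl hmk)
        have hji : t + ((m + 1 : ℕ) : Fin k) = (t + (m : Fin k)) + 1 := by
          push_cast; ring
        have hadjij : G.square.Adj (c (t + (m : Fin k))) (c (t + ((m + 1 : ℕ) : Fin k))) :=
          (hadj _ _).mpr (Or.inl hji)
        have hjt : t + ((m + 1 : ℕ) : Fin k) ≠ t := by
          intro h
          have h0 : ((m + 1 : ℕ) : Fin k) = 0 := by linear_combination h
          exact absurd (ha0 _ (by omega) h0) (by omega)
        have hit : t + (m : Fin k) ≠ t := by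
          intro h
          have h0 : ((m : ℕ) : Fin k) = 0 := by linear_combination h
          exact absurd (ha0 _ (by omega) h0) (by omega)
        by_cases hjB : c (t + ((m + 1 : ℕ) : Fin k)) ∈ B
        · rcases IH' with ⟨hiB, hilt⟩ | ⟨hiA, hiN, hiall⟩
          · -- B-B step
            left; refine ⟨hjB, ?_⟩
            have hpne := hposne _ hjt hjB
            rcases hcmp _ hpne with h | h
            · exact h
            · exfalso
              obtain ⟨a, haA, hau, hav⟩ := bb_edge hbip hiB hjB hadjij
              have hat : G.Adj a (c t) :=
                conv_between hconv haA hiB hjB htB hau hav (hbtw _ _ hilt h)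
              have h1' : G.square.Adj (c (t + (m : Fin k))) (c t) :=
                ⟨fun he => hit (hinj he), Or.inr ⟨a, hau.symm, hat⟩⟩
              have h2' : G.square.Adj (c (t + ((m + 1 : ℕ) : Fin k))) (c t) :=
                ⟨fun he => hjt (hinj he), Or.inr ⟨a, hav.symm, hat⟩⟩
              have e1 := hadj_it m (by omega) (by omega) h1'
              have e2 := hadj_it (m + 1) (by omega) (by omega) h2'
              omega
          · -- A-B step
            left
            exact ⟨hjB, hiall _ hjB ((ab_edge hbip hiA hjB).mp hadjij)⟩
        · have hjA : c (t + ((m + 1 : ℕ) : Fin k)) ∈ A := hA_of _ hjB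
          have hmk2 : m + 1 ≤ k - 2 := by
            rcases hside with h | h
            · exact h
            · exact absurd h hjB
          have hjN : ¬ G.Adj (c (t + ((m + 1 : ℕ) : Fin k))) (c t) := by
            intro hadj'
            have h2' := (ab_edge hbip hjA htB).mpr hadj'
            have e2 := hadj_it (m + 1) (by omega) (by omega) h2'
            omega
          right; refine ⟨hjA, hjN, ?_⟩
          rcases IH' with ⟨hiB, hilt⟩ | ⟨hiA, hiN, hiall⟩
          · -- B-A step
            have hGij : G.Adj (c (t + ((m + 1 : ℕ) : Fin k))) (c (t + (m : Fin k))) :=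
              (ab_edge hbip hjA hiB).mp hadjij.symm
            intro b hbB hb
            have hbne : ordB b ≠ R := by
              intro he
              exact hjN (by rw [hconv.1 hbB htB he] at hb; exact hb)
            rcases hcmp _ hbne with h | h
            · exact h
            · exact absurd
                (conv_between hconv hjA hiB hbB htB hGij hb (hbtw _ _ hilt h)) hjN
          · -- A-A step
            obtain ⟨b', hb'B, hib', hjb'⟩ := aa_edge hbip hiA hjA hadjij
            have hltb' := hiall b' hb'B hib'
            intro b hbB hb
            have hbne : ordB b ≠ R := by
              intro he
              exact hjN (by rw [hconv.1 hbB htB he] at hb; exact hb)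
            rcases hcmp _ hbne with h | h
            · exact h
            · exact absurd
                (conv_between hconv hjA hb'B hbB htB hjb' hb (hbtw _ _ hltb' h)) hjN
  have ht1ne : t + 1 ≠ t := by
    intro h
    exact hone0 (by linear_combination h)
  have hs_ne := hposne (t + 1) ht1ne ht1B
  rcases Nat.lt_or_ge (ordB (c (t + 1))) R with hs | hs
  · have hmain := main (· < ·) (fun x h => by omega) (fun x y h h' => by omega) hs
      r hr1 hr2 (Or.inr hrB)
    rcases hmain with ⟨_, h⟩ | ⟨hA', _⟩
    · exact ⟨fun _ => hs, fun _ => h⟩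
    · exact absurd hrB (hnB hA')
  · have hs' : R < ordB (c (t + 1)) := by omega
    have hmain := main (fun x y => y < x) (fun x h => by omega) (fun x y h h' => by omega) hs'
      r hr1 hr2 (Or.inr hrB)
    rcases hmain with ⟨_, h⟩ | ⟨hA', _⟩
    · constructor <;> intro h' <;> omega
    · exact absurd hrB (hnB hA')


/-- Any induced cycle `C` of length `k ≥ 4` in the square of a convex bipartite graph
`G = (A,B,E)` has exactly `2` vertices in `B` and `k − 2` vertices in `A`; moreover
its vertices can be relabeled as `(v_1, …, v_k)` so that `(v_1, …, v_{k−2})` is an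
`(A, v_k, v_{k−1})`-path. -/
theorem induced_cycle_in_square_convex_bipartite {V : Type*} (G : SimpleGraph V)
    (A B : Set V) (ordB : V → ℕ) (hbip : G.IsBipartitionOf A B)
    (hconv : G.IsConvexityOrder A B ordB)
    (k : ℕ) (hk : 4 ≤ k) (c : Fin k → V) (hc : G.square.IsInducedCycleOn k c) :
    {i : Fin k | c i ∈ B}.ncard = 2 ∧
    {i : Fin k | c i ∈ A}.ncard = k - 2 ∧
    ∃ d : Fin k ≃ Fin k,
      G.square.IsInducedCycleOn k (c ∘ d) ∧
      G.IsABPath A B (k - 2) (fun i => c (d (Fin.castLE (by omega) i)))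
        (c (d ⟨k - 1, by omega⟩)) (c (d ⟨k - 2, by omega⟩)) := by
  haveI : NeZero k := ⟨by omega⟩
  obtain ⟨hinj, hcycle⟩ := hc
  have hA_of : ∀ v, v ∉ B → v ∈ A := fun v h => (hbip.1 v).resolve_right h
  have hnB : ∀ {v}, v ∈ A → v ∉ B := fun hv hb => Set.disjoint_left.mp hbip.2.1 hv hb
  have hnc : ∀ m n : ℕ, m < k → n < k → ((m : Fin k) = (n : Fin k)) → m = n := by
    intro m n hm hn h
    simpa [Nat.mod_eq_of_lt hm, Nat.mod_eq_of_lt hn] using congrArg Fin.val h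
  have ha0 : ∀ n' : ℕ, n' < k → ((n' : ℕ) : Fin k) = 0 → n' = 0 := by
    intro n' h h'
    exact hnc n' 0 h (by omega) (by rw [h', Nat.cast_zero])
  have ha1 : ∀ n' : ℕ, n' < k → ((n' : ℕ) : Fin k) = 1 → n' = 1 := by
    intro n' h h'
    exact hnc n' 1 h (by omega) (by rw [h', Nat.cast_one])
  have hval1 : (1 : Fin k).val = 1 := by
    rw [Fin.val_one']; exact Nat.mod_eq_of_lt (by omega)
  have hone0 : (1 : Fin k) ≠ 0 := by
    intro h
    have hv := hval1
    rw [h] at hv; simp at hv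
  have hmod : ∀ i j : Fin k, ((j : ℕ) = ((i : ℕ) + 1) % k) ↔ j = i + 1 := by
    intro i j
    rw [Fin.ext_iff, Fin.val_add, hval1]
  have hadj : ∀ i j : Fin k, G.square.Adj (c i) (c j) ↔ j = i + 1 ∨ i = j + 1 := by
    intro i j
    rw [hcycle i j]
    exact or_congr (hmod i j) (hmod j i)
  have hrefl_adj : ∀ (u i j : Fin k),
      G.square.Adj (c (u - i)) (c (u - j)) ↔ j = i + 1 ∨ i = j + 1 := by
    intro u i j
    rw [hadj (u - i) (u - j)]
    constructor
    · rintro (h | h)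
      · exact Or.inr (by linear_combination h)
      · exact Or.inl (by linear_combination h)
    · rintro (h | h)
      · exact Or.inr (by linear_combination h)
      · exact Or.inl (by linear_combination h)
  have hposne : ∀ t' i : Fin k, c t' ∈ B → i ≠ t' → c i ∈ B →
      ordB (c i) ≠ ordB (c t') :=
    fun t' i ht' hne hiB h => hne (hinj (hconv.1 hiB ht' h))
  have hx1 : ((k - 1 : ℕ) : Fin k) + 1 = 0 := by
    have h : (((k - 1) + 1 : ℕ) : Fin k) = 0 := by
      rw [show (k - 1) + 1 = k from by omega, Fin.natCast_self]
    push_cast at h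
    exact h
  have hw1 : ∀ t : Fin k, t + ((k - 1 : ℕ) : Fin k) + 1 = t := by
    intro t; linear_combination hx1
  have hK : ∀ t : Fin k, ¬ G.square.Adj (c (t + 1)) (c (t + ((k - 1 : ℕ) : Fin k))) := by
    intro t h
    rcases (hadj _ _).mp h with h' | h'
    · have h0 : ((k - 1 : ℕ) : Fin k) = 1 + 1 := by linear_combination h'
      have hval : (k - 1) % k = ((1 : Fin k) + 1).val := by
        simpa using congrArg Fin.val h0
      rw [Fin.val_add, hval1, Nat.mod_eq_of_lt (show k - 1 < k by omega),
        Nat.mod_eq_of_lt (show 1 + 1 < k by omega)] at hval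
      omega
    · have h0 : ((k - 1 : ℕ) : Fin k) = 0 := by linear_combination -h'
      exact absurd (ha0 _ (by omega) h0) (by omega)
  have hvwne : ∀ t : Fin k, c (t + 1) ≠ c (t + ((k - 1 : ℕ) : Fin k)) := by
    intro t h
    have h2 := hinj h
    have h0 : ((k - 1 : ℕ) : Fin k) = 1 := by linear_combination -h2
    have := ha1 _ (by omega) h0
    omega
  -- there is a vertex of the cycle in B
  have exB : ∃ t : Fin k, c t ∈ B := by
    by_contra hno
    push_neg at hno
    have hall : ∀ i, c i ∈ A := fun i => hA_of _ (hno i)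
    have hPne : ∀ i : Fin k, {n : ℕ | ∃ b, b ∈ B ∧ G.Adj (c i) b ∧ ordB b = n}.Nonempty := by
      intro i
      obtain ⟨b, hbB, hib, _⟩ := aa_edge hbip (hall i) (hall (i + 1))
        ((hadj i (i + 1)).mpr (Or.inl rfl))
      exact ⟨ordB b, b, hbB, hib, rfl⟩
    haveI : Nonempty (Fin k) := ⟨⟨0, by omega⟩⟩
    obtain ⟨t, htmax⟩ := Finite.exists_max
      (fun i : Fin k => sInf {n : ℕ | ∃ b, b ∈ B ∧ G.Adj (c i) b ∧ ordB b = n})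
    obtain ⟨bu, hbuB, hbut, hbuv⟩ := Nat.sInf_mem (hPne t)
    obtain ⟨b1, hb1B, hb1t, hb1v⟩ := aa_edge hbip (hall t) (hall (t + 1))
      ((hadj t (t + 1)).mpr (Or.inl rfl))
    obtain ⟨b2, hb2B, hb2w, hb2t⟩ := aa_edge hbip (hall (t + ((k - 1 : ℕ) : Fin k))) (hall t)
      ((hadj (t + ((k - 1 : ℕ) : Fin k)) t).mpr (Or.inl (hw1 t).symm))
    obtain ⟨bv, hbvB, hbvadj, hbvval⟩ := Nat.sInf_mem (hPne (t + 1))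
    obtain ⟨bw, hbwB, hbwadj, hbwval⟩ := Nat.sInf_mem (hPne (t + ((k - 1 : ℕ) : Fin k)))
    have h1 : sInf {n : ℕ | ∃ b, b ∈ B ∧ G.Adj (c t) b ∧ ordB b = n} ≤ ordB b1 :=
      Nat.sInf_le ⟨b1, hb1B, hb1t, rfl⟩
    have h2 : sInf {n : ℕ | ∃ b, b ∈ B ∧ G.Adj (c t) b ∧ ordB b = n} ≤ ordB b2 :=
      Nat.sInf_le ⟨b2, hb2B, hb2t, rfl⟩
    have hmv := htmax (t + 1)
    have hmw := htmax (t + ((k - 1 : ℕ) : Fin k))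
    have hv : G.Adj (c (t + 1)) bu :=
      conv_between hconv (hall _) hbvB hb1B hbuB hbvadj hb1v (Or.inl ⟨by omega, by omega⟩)
    have hw : G.Adj (c (t + ((k - 1 : ℕ) : Fin k))) bu :=
      conv_between hconv (hall _) hbwB hb2B hbuB hbwadj hb2w (Or.inl ⟨by omega, by omega⟩)
    exact hK t ⟨hvwne t, Or.inr ⟨bu, hv, hw.symm⟩⟩
  -- every B-vertex of the cycle has a B-neighbour on the cycle
  have step1 : ∀ t : Fin k, c t ∈ B →
      (c (t + 1) ∈ B ∨ c (t + ((k - 1 : ℕ) : Fin k)) ∈ B) := by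
    intro t htB
    by_contra hcon
    push_neg at hcon
    obtain ⟨h1, h2⟩ := hcon
    have hvA := hA_of _ h1
    have hwA := hA_of _ h2
    have e1 : G.square.Adj (c (t + 1)) (c t) := ((hadj t (t + 1)).mpr (Or.inl rfl)).symm
    have e2 : G.square.Adj (c (t + ((k - 1 : ℕ) : Fin k))) (c t) :=
      (hadj _ t).mpr (Or.inl (hw1 t).symm)
    have g1 : G.Adj (c (t + 1)) (c t) := (ab_edge hbip hvA htB).mp e1
    have g2 : G.Adj (c (t + ((k - 1 : ℕ) : Fin k))) (c t) := (ab_edge hbip hwA htB).mp e2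
    exact hK t ⟨hvwne t, Or.inr ⟨c t, g1, g2.symm⟩⟩
  -- no B-vertex has two B-neighbours
  have app1 : ∀ t : Fin k, c t ∈ B → c (t + 1) ∈ B →
      c (t + ((k - 1 : ℕ) : Fin k)) ∈ B → False := by
    intro t htB h1B hwB
    have hiff := side_prop hbip hconv hk hinj hadj t htB h1B (k - 1) (by omega) le_rfl hwB
    have ht1ne : t + 1 ≠ t := fun h => hone0 (by linear_combination h)
    have htwne : t + ((k - 1 : ℕ) : Fin k) ≠ t := by
      intro h
      have h0 : ((k - 1 : ℕ) : Fin k) = 0 := by linear_combination h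
      exact absurd (ha0 _ (by omega) h0) (by omega)
    have hxne := hposne t (t + 1) htB ht1ne h1B
    have hyne := hposne t (t + ((k - 1 : ℕ) : Fin k)) htB htwne hwB
    obtain ⟨ap, hapA, hap1, hap2⟩ := bb_edge hbip htB h1B ((hadj t (t + 1)).mpr (Or.inl rfl))
    obtain ⟨am, hamA, ham1, ham2⟩ := bb_edge hbip hwB htB ((hadj _ t).mpr (Or.inl (hw1 t).symm))
    have hcom : ∃ a, a ∈ A ∧ G.Adj a (c (t + 1)) ∧ G.Adj a (c (t + ((k - 1 : ℕ) : Fin k))) := by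
      rcases Nat.lt_or_ge (ordB (c (t + 1))) (ordB (c t)) with hxR | hxR
      · have hyR : ordB (c (t + ((k - 1 : ℕ) : Fin k))) < ordB (c t) := hiff.mpr hxR
        rcases le_total (ordB (c (t + 1))) (ordB (c (t + ((k - 1 : ℕ) : Fin k)))) with hxy | hxy
        · exact ⟨ap, hapA, hap2,
            conv_between hconv hapA h1B htB hwB hap2 hap1 (Or.inl ⟨hxy, by omega⟩)⟩
        · exact ⟨am, hamA,
            conv_between hconv hamA hwB htB h1B ham1 ham2 (Or.inl ⟨hxy, by omega⟩), ham1⟩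
      · have hyR : ordB (c t) < ordB (c (t + ((k - 1 : ℕ) : Fin k))) := by omega
        rcases le_total (ordB (c (t + 1))) (ordB (c (t + ((k - 1 : ℕ) : Fin k)))) with hxy | hxy
        · exact ⟨am, hamA,
            conv_between hconv hamA htB hwB h1B ham2 ham1 (Or.inl ⟨by omega, hxy⟩), ham1⟩
        · exact ⟨ap, hapA, hap2,
            conv_between hconv hapA htB h1B hwB hap1 hap2 (Or.inl ⟨by omega, hxy⟩)⟩
    obtain ⟨a, haA, h1', h2'⟩ := hcom
    exact hK t ⟨hvwne t, Or.inr ⟨a, h1'.symm, h2'⟩⟩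
  -- get an adjacent B-pair
  obtain ⟨t0, ht0⟩ := exB
  have hpair : ∃ t : Fin k, c t ∈ B ∧ c (t + 1) ∈ B := by
    rcases step1 t0 ht0 with h | h
    · exact ⟨t0, ht0, h⟩
    · exact ⟨t0 + ((k - 1 : ℕ) : Fin k), h, by rw [hw1 t0]; exact ht0⟩
  obtain ⟨t, htB, ht1B⟩ := hpair
  have htne : t ≠ t + 1 := fun h => hone0 (by linear_combination -h)
  have htm1A : c (t + ((k - 1 : ℕ) : Fin k)) ∈ A := by
    by_contra h
    exact app1 t htB ht1B ((hbip.1 _).resolve_left h)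
  have ht2A : c (t + 1 + 1) ∈ A := by
    by_contra h
    have h2B : c (t + 1 + 1) ∈ B := (hbip.1 _).resolve_left h
    apply app1 (t + 1) ht1B h2B
    have he : (t + 1) + ((k - 1 : ℕ) : Fin k) = t := by linear_combination hw1 t
    rw [he]; exact htB
  -- index-arithmetic helpers
  have hrw : ∀ t' s' : Fin k, t' + (((s' - t').val : ℕ) : Fin k) = s' := by
    intro t' s'
    rw [Fin.cast_val_eq_self]
    ring
  have hval_pos : ∀ x : Fin k, x ≠ 0 → 1 ≤ x.val := by
    intro x hx
    rcases Nat.eq_zero_or_pos x.val with h | h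
    · exact absurd (Fin.ext (h.trans (Fin.val_zero k).symm)) hx
    · exact h
  -- the B-pair is unique
  have honly : ∀ s : Fin k, c s ∈ B → s = t ∨ s = t + 1 := by
    intro s₀ hs₀B
    by_contra hcon
    push_neg at hcon
    obtain ⟨hst₀, hst1₀⟩ := hcon
    have hpair2 : ∃ s : Fin k, c s ∈ B ∧ c (s + 1) ∈ B ∧ s ≠ t ∧ s ≠ t + 1 ∧
        s + 1 ≠ t ∧ s + 1 ≠ t + 1 := by
      rcases step1 s₀ hs₀B with h | h
      · refine ⟨s₀, hs₀B, h, hst₀, hst1₀, ?_, ?_⟩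
        · intro he
          have hh : s₀ = t + ((k - 1 : ℕ) : Fin k) := by linear_combination he - hw1 t
          rw [hh] at hs₀B
          exact hnB htm1A hs₀B
        · intro he
          exact hst₀ (by linear_combination he)
      · refine ⟨s₀ + ((k - 1 : ℕ) : Fin k), h, ?_, ?_, ?_, ?_, ?_⟩
        · rw [hw1 s₀]; exact hs₀B
        · intro he
          exact hst1₀ (by linear_combination he - hx1)
        · intro he
          have hh : s₀ = t + 1 + 1 := by linear_combination he - hx1
          rw [hh] at hs₀B
          exact hnB ht2A hs₀B
        · intro he
          exact hst₀ (by linear_combination he - hw1 s₀)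
        · intro he
          exact hst1₀ (by linear_combination he - hw1 s₀)
    obtain ⟨s, hsB, hs1B, hst, hst1, hs1t, hs1t1⟩ := hpair2
    have d1 := hposne t (t + 1) htB (fun h => htne h.symm) ht1B
    have d2 := hposne t s htB hst hsB
    have d3 := hposne (t + 1) s ht1B hst1 hsB
    -- separator at t, target s
    have hA1 := side_prop hbip hconv hk hinj hadj t htB ht1B ((s - t).val)
      (hval_pos _ (sub_ne_zero.mpr hst)) (by have := (s - t).isLt; omega)
      (by rw [hrw t s]; exact hsB)
    rw [hrw t s] at hA1
    -- separator at s, targets t and t+1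
    have hB1 := side_prop hbip hconv hk hinj hadj s hsB hs1B ((t - s).val)
      (hval_pos _ (sub_ne_zero.mpr (fun h => hst h.symm))) (by have := (t - s).isLt; omega)
      (by rw [hrw s t]; exact htB)
    rw [hrw s t] at hB1
    have hB2 := side_prop hbip hconv hk hinj hadj s hsB hs1B ((t + 1 - s).val)
      (hval_pos _ (sub_ne_zero.mpr (fun h => hst1 h.symm)))
      (by have := (t + 1 - s).isLt; omega)
      (by rw [hrw s (t + 1)]; exact ht1B)
    rw [hrw s (t + 1)] at hB2
    -- reflected cycle, separator at t+1, start t, target s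
    have h2inj : Function.Injective (fun i : Fin k => c ((t + 1 + (t + 1)) - i)) := by
      intro x y h
      have h2 : (t + 1 + (t + 1)) - x = (t + 1 + (t + 1)) - y := hinj h
      linear_combination -h2
    have hCm := side_prop hbip hconv hk h2inj (hrefl_adj (t + 1 + (t + 1))) (t + 1)
      (show c ((t + 1 + (t + 1)) - (t + 1)) ∈ B by
        rw [show (t + 1 + (t + 1)) - (t + 1) = t + 1 from by ring]; exact ht1B)
      (show c ((t + 1 + (t + 1)) - (t + 1 + 1)) ∈ B by
        rw [show (t + 1 + (t + 1)) - (t + 1 + 1) = t from by ring]; exact htB)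
      (((t + 1 + (t + 1) - s) - (t + 1)).val)
      (hval_pos _ (sub_ne_zero.mpr (fun h => hst1 (by linear_combination -h))))
      (by have := ((t + 1 + (t + 1) - s) - (t + 1)).isLt; omega)
      (by rw [hrw (t + 1) (t + 1 + (t + 1) - s),
            show (t + 1 + (t + 1)) - ((t + 1 + (t + 1)) - s) = s from by ring]
          exact hsB)
    rw [hrw (t + 1) (t + 1 + (t + 1) - s),
      show (t + 1 + (t + 1)) - ((t + 1 + (t + 1)) - s) = s from by ring,
      show (t + 1 + (t + 1)) - (t + 1) = t + 1 from by ring,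
      show (t + 1 + (t + 1)) - (t + 1 + 1) = t from by ring] at hCm
    omega
  -- the set of B-indices is exactly {t, t+1}
  have hsetB : {i : Fin k | c i ∈ B} = {t, t + 1} := by
    ext i
    simp only [Set.mem_setOf_eq, Set.mem_insert_iff, Set.mem_singleton_iff]
    constructor
    · exact honly i
    · rintro (rfl | rfl)
      · exact htB
      · exact ht1B
  have hx2 : ((k - 2 : ℕ) : Fin k) + 1 + 1 = 0 := by
    have h : (((k - 2) + 1 + 1 : ℕ) : Fin k) = 0 := by
      rw [show (k - 2) + 1 + 1 = k from by omega, Fin.natCast_self]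
    push_cast at h
    linear_combination h
  refine ⟨?_, ?_, ?_⟩
  · rw [hsetB]
    exact Set.ncard_pair htne
  · have hcompl : {i : Fin k | c i ∈ A} = ({t, t + 1} : Set (Fin k))ᶜ := by
      rw [← hsetB]
      ext i
      simp only [Set.mem_setOf_eq, Set.mem_compl_iff]
      constructor
      · exact fun h => hnB h
      · exact fun h => hA_of _ h
    rw [hcompl]
    have h := Set.ncard_add_ncard_compl ({t, t + 1} : Set (Fin k))
    rw [Set.ncard_pair htne] at h
    have hcard : Nat.card (Fin k) = k := by simp
    omega
  · have hinvol : Function.Involutive (fun i : Fin k => t - 1 - i) := by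
      intro i; ring
    refine ⟨Function.Involutive.toPerm _ hinvol, ?_, ?_⟩
    · refine ⟨hinj.comp (Equiv.injective _), ?_⟩
      intro i j
      have hshow : G.square.Adj ((c ∘ (Function.Involutive.toPerm _ hinvol)) i)
          ((c ∘ (Function.Involutive.toPerm _ hinvol)) j)
          ↔ G.square.Adj (c (t - 1 - i)) (c (t - 1 - j)) := Iff.rfl
      rw [hshow, hrefl_adj (t - 1) i j]
      exact or_congr (hmod i j).symm (hmod j i).symm
    · have hle : (k - 2 : ℕ) ≤ k := by omega
      have hcv : ∀ i : Fin (k - 2), (((i : ℕ) : ℕ) : Fin k) = (Fin.castLE hle i : Fin k) := by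
        intro i
        rw [Fin.ext_iff]
        simp only [Fin.val_natCast, Fin.coe_castLE]
        exact Nat.mod_eq_of_lt (by have := i.isLt; omega)
      have hdA : ∀ i : Fin (k - 2),
          c (t - 1 - (Fin.castLE hle i : Fin k)) ∈ A := by
        intro i
        have hv : ((Fin.castLE hle i : Fin k) : ℕ) = (i : ℕ) := rfl
        have hvlt : (i : ℕ) < k - 2 := i.isLt
        apply hA_of
        intro hB
        rcases honly _ hB with h | h
        · have h0 : (Fin.castLE hle i : Fin k) + 1 = 0 := by linear_combination -h
          have h1 : (((i : ℕ) + 1 : ℕ) : Fin k) = 0 := by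
            push_cast
            rw [hcv i]
            exact h0
          have := ha0 _ (by omega) h1
          omega
        · have h0 : (Fin.castLE hle i : Fin k) + 1 + 1 = 0 := by linear_combination -h
          have h1 : (((i : ℕ) + 1 + 1 : ℕ) : Fin k) = 0 := by
            push_cast
            rw [hcv i]
            linear_combination h0
          have := ha0 _ (by omega) h1
          omega
      have hdm1 : (⟨k - 1, by omega⟩ : Fin k) = ((k - 1 : ℕ) : Fin k) := by
        rw [Fin.ext_iff]
        simp [Nat.mod_eq_of_lt (show k - 1 < k by omega)]
      have hdm2 : (⟨k - 2, by omega⟩ : Fin k) = ((k - 2 : ℕ) : Fin k) := by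
        rw [Fin.ext_iff]
        simp [Nat.mod_eq_of_lt (show k - 2 < k by omega)]
      have hb_eq : c ((Function.Involutive.toPerm _ hinvol) ⟨k - 1, by omega⟩) = c t := by
        show c (t - 1 - (⟨k - 1, by omega⟩ : Fin k)) = c t
        rw [hdm1, show t - 1 - ((k - 1 : ℕ) : Fin k) = t from by linear_combination -hx1]
      have hb'_eq : c ((Function.Involutive.toPerm _ hinvol) ⟨k - 2, by omega⟩) = c (t + 1) := by
        show c (t - 1 - (⟨k - 2, by omega⟩ : Fin k)) = c (t + 1)
        rw [hdm2, show t - 1 - ((k - 2 : ℕ) : Fin k) = t + 1 from by linear_combination -hx2]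
      rw [hb_eq, hb'_eq]
      constructor
      · omega
      · exact fun i => hdA i
      · intro a b h
        have h1 : t - 1 - (Fin.castLE hle a : Fin k) = t - 1 - (Fin.castLE hle b : Fin k) :=
          hinj h
        have h2 : (Fin.castLE hle a : Fin k) = Fin.castLE hle b := by linear_combination -h1
        rw [Fin.ext_iff] at h2 ⊢
        exact h2
      · intro i j hij
        have hshow : G.square.Adj (c ((Function.Involutive.toPerm _ hinvol) (Fin.castLE hle i)))
            (c ((Function.Involutive.toPerm _ hinvol) (Fin.castLE hle j)))
            ↔ G.square.Adj (c (t - 1 - (Fin.castLE hle i : Fin k)))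
              (c (t - 1 - (Fin.castLE hle j : Fin k))) := Iff.rfl
        rw [hshow, hrefl_adj (t - 1)]
        have hi := i.isLt
        have hj := j.isLt
        constructor
        · rintro (h | h)
          · have hv := congrArg Fin.val h
            rw [Fin.val_add, hval1] at hv
            simp only [Fin.coe_castLE] at hv
            rw [Nat.mod_eq_of_lt (show (i : ℕ) + 1 < k by omega)] at hv
            exact hv
          · have hv := congrArg Fin.val h
            rw [Fin.val_add, hval1] at hv
            simp only [Fin.coe_castLE] at hv
            rw [Nat.mod_eq_of_lt (show (j : ℕ) + 1 < k by omega)] at hv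
            omega
        · intro h
          left
          rw [Fin.ext_iff, Fin.val_add, hval1]
          simp only [Fin.coe_castLE]
          rw [Nat.mod_eq_of_lt (show (i : ℕ) + 1 < k by omega)]
          exact h
      · exact htB
      · exact ht1B
      · exact fun h => htne (hinj h)
      · intro i
        have hshow : G.Adj (c ((Function.Involutive.toPerm _ hinvol) (Fin.castLE hle i))) (c t)
            ↔ G.Adj (c (t - 1 - (Fin.castLE hle i : Fin k))) (c t) := Iff.rfl
        rw [hshow, ← ab_edge hbip (hdA i) htB, hadj (t - 1 - (Fin.castLE hle i : Fin k)) t]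
        constructor
        · rintro (h | h)
          · have h0 : (Fin.castLE hle i : Fin k) = 0 := by linear_combination h
            have hv := congrArg Fin.val h0
            simpa using hv
          · exfalso
            have hilt := i.isLt
            have h0 : (Fin.castLE hle i : Fin k) + ((2 : ℕ) : Fin k) = 0 := by
              push_cast
              linear_combination -h
            have h1 : (((i : ℕ) + 2 : ℕ) : Fin k) = 0 := by
              push_cast
              rw [hcv i]
              push_cast at h0
              linear_combination h0
            rcases Nat.lt_or_ge ((i : ℕ) + 2) k with hlt | hge
            · have := ha0 _ hlt h1
              omega
            · have hv := congrArg Fin.val h1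
              simp only [Fin.val_natCast, Fin.val_zero] at hv
              rw [Nat.mod_eq_sub_mod hge,
                Nat.mod_eq_of_lt (show (i : ℕ) + 2 - k < k by omega)] at hv
              omega
        · intro h
          left
          have h0 : (Fin.castLE hle i : Fin k) = 0 := by
            rw [← hcv i, h, Nat.cast_zero]
          rw [h0]
          ring
      · intro i
        have hilt : (i : ℕ) < k - 2 := i.isLt
        have hshow : G.Adj (c ((Function.Involutive.toPerm _ hinvol) (Fin.castLE hle i)))
            (c (t + 1)) ↔ G.Adj (c (t - 1 - (Fin.castLE hle i : Fin k))) (c (t + 1)) := Iff.rfl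
        rw [hshow, ← ab_edge hbip (hdA i) ht1B,
          hadj (t - 1 - (Fin.castLE hle i : Fin k)) (t + 1)]
        constructor
        · rintro (h | h)
          · exfalso
            have h0 : (Fin.castLE hle i : Fin k) + 1 = 0 := by linear_combination h
            have h1 : (((i : ℕ) + 1 : ℕ) : Fin k) = 0 := by
              push_cast
              rw [hcv i]
              exact h0
            have := ha0 _ (by omega) h1
            omega
          · have h0 : (Fin.castLE hle i : Fin k) + ((3 : ℕ) : Fin k) = 0 := by
              push_cast
              linear_combination -h
            have h1 : (((i : ℕ) + 3 : ℕ) : Fin k) = 0 := by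
              push_cast
              rw [hcv i]
              push_cast at h0
              linear_combination h0
            rcases Nat.lt_or_ge ((i : ℕ) + 3) k with hlt | hge
            · have := ha0 _ hlt h1
              omega
            · have hv := congrArg Fin.val h1
              simp only [Fin.val_natCast, Fin.val_zero] at hv
              rw [Nat.mod_eq_sub_mod hge,
                Nat.mod_eq_of_lt (show (i : ℕ) + 3 - k < k by omega)] at hv
              omega
        · intro h
          right
          have h1 : (((i : ℕ) + 3 : ℕ) : Fin k) = 0 := by
            rw [show (i : ℕ) + 3 = k from by omega, Fin.natCast_self]
          have h0 : (Fin.castLE hle i : Fin k) + ((3 : ℕ) : Fin k) = 0 := by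
            rw [show ((3 : ℕ) : Fin k) = (((i : ℕ) + 3 : ℕ) : Fin k) - (((i : ℕ) : ℕ) : Fin k)
              from by push_cast; ring]
            rw [h1, hcv i]
            ring
          push_cast at h0
          linear_combination -h0
end
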